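/- arXiv:1405.4316 — 7 statements merged into one kernel-verified Lean document; each statement's English description precedes it below -/
import Mathlib

section
/- Let X and Y be real-valued random variables on a probability space with E(X²) < ∞ and E(Y²) < ∞. Then Cov(X, Y) = ∫_{−∞}^{∞} ∫_{−∞}^{∞} H(x, y) dx dy, where H(x, y) = P(X > x, Y > y) − P(X > x)·P(Y > y) (Hoeffding's covariance formula). -/
open MeasureTheory ProbabilityTheory Set

noncomputable def cov {Ω : Type*} [MeasurableSpace Ω] (μ : Measure Ω) (X Y : Ω → ℝ) : ℝ :=
  (∫ ω, X ω * Y ω ∂μ) - (∫ ω, X ω ∂μ) * (∫ ω, Y ω ∂μ)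

noncomputable def dstep (a a' x : ℝ) : ℝ :=
  (if x < a then 1 else 0) - (if x < a' then 1 else 0)

lemma dstep_eq (a a' : ℝ) :
    dstep a a' = fun x => (Ico a' a).indicator 1 x - (Ico a a').indicator 1 x := by
  funext x
  unfold dstep
  by_cases h1 : x < a <;> by_cases h2 : x < a' <;>
    simp [indicator_apply, mem_Ico, h1, h2, not_lt.mp, le_of_lt]

lemma integrable_indicator_Ico (a b : ℝ) :
    Integrable ((Ico a b).indicator (1 : ℝ → ℝ)) := by
  rw [integrable_indicator_iff measurableSet_Ico]
  exact integrableOn_const (by simp [Real.volume_Ico, ENNReal.ofReal_lt_top])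

lemma integrable_dstep (a a' : ℝ) : Integrable (dstep a a') := by
  rw [dstep_eq]; exact (integrable_indicator_Ico a' a).sub (integrable_indicator_Ico a a')

lemma integral_dstep (a a' : ℝ) : ∫ x, dstep a a' x = a - a' := by
  rw [dstep_eq, integral_sub (integrable_indicator_Ico a' a) (integrable_indicator_Ico a a'),
    integral_indicator_one measurableSet_Ico, integral_indicator_one measurableSet_Ico,
    measureReal_def, measureReal_def, Real.volume_Ico, Real.volume_Ico]
  rcases le_total a' a with h | h
  · rw [ENNReal.toReal_ofReal (by linarith), ENNReal.ofReal_eq_zero.2 (by linarith)]; simp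
  · rw [ENNReal.ofReal_eq_zero.2 (by linarith), ENNReal.toReal_ofReal (by linarith)]
    simp

lemma abs_dstep_eq (a a' x : ℝ) :
    |dstep a a' x| = (Ico a' a).indicator 1 x + (Ico a a').indicator 1 x := by
  unfold dstep
  by_cases h1 : x < a <;> by_cases h2 : x < a'
  · simp [indicator_apply, mem_Ico, h1, h2, not_le.2 h1, not_le.2 h2]
  · simp [indicator_apply, mem_Ico, h1, h2, le_of_not_gt h2, not_le.2 h1]
  · simp [indicator_apply, mem_Ico, h1, h2, le_of_not_gt h1, not_le.2 h2]
  · simp [indicator_apply, mem_Ico, h1, h2]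

lemma integral_abs_dstep (a a' : ℝ) : ∫ x, |dstep a a' x| = |a - a'| := by
  simp only [abs_dstep_eq]
  rw [integral_add (integrable_indicator_Ico a' a) (integrable_indicator_Ico a a'),
    integral_indicator_one measurableSet_Ico, integral_indicator_one measurableSet_Ico,
    measureReal_def, measureReal_def, Real.volume_Ico, Real.volume_Ico]
  rcases le_total a' a with h | h
  · rw [ENNReal.toReal_ofReal (by linarith), ENNReal.ofReal_eq_zero.2 (by linarith),
      abs_of_nonneg (by linarith : (0:ℝ) ≤ a - a')]; simp
  · rw [ENNReal.ofReal_eq_zero.2 (by linarith), ENNReal.toReal_ofReal (by linarith),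
      abs_of_nonpos (by linarith : a - a' ≤ 0)]; simp

lemma memL2_mul_integrable {α : Type*} {m : MeasurableSpace α} {μ : Measure α}
    {f g : α → ℝ} (hf : MemLp f 2 μ) (hg : MemLp g 2 μ) :
    Integrable (fun x => f x * g x) μ := by
  have h := (hf.integrable_sq.add hg.integrable_sq).const_mul (1/2 : ℝ)
  refine h.mono' (hf.aestronglyMeasurable.mul hg.aestronglyMeasurable) ?_
  filter_upwards with x
  have : |f x| * |g x| ≤ 1/2 * (f x ^ 2 + g x ^ 2) := by
    nlinarith [sq_nonneg (|f x| - |g x|), sq_abs (f x), sq_abs (g x), abs_nonneg (f x),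
      abs_nonneg (g x)]
  simpa [Real.norm_eq_abs, abs_mul] using this

lemma ind_integrable {α : Type*} {m : MeasurableSpace α} {μ : Measure α} [IsFiniteMeasure μ]
    {s : Set α} (hs : MeasurableSet s) : Integrable (s.indicator (1 : α → ℝ)) μ := by
  rw [integrable_indicator_iff hs]
  exact integrableOn_const (measure_lt_top μ s).ne

lemma mul_ind {α : Type*} (s t : Set α) (ω : α) :
    s.indicator (1 : α → ℝ) ω * t.indicator 1 ω = (s ∩ t).indicator 1 ω := by
  by_cases hs : ω ∈ s <;> by_cases ht : ω ∈ t <;> simp [hs, ht, mem_inter_iff]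

lemma integral_comp_mp {α β : Type*} [MeasurableSpace α] [MeasurableSpace β]
    {μ : Measure α} {ν : Measure β} {f : α → β} (hf : MeasurePreserving f μ ν)
    {g : β → ℝ} (hg : AEStronglyMeasurable g ν) :
    ∫ a, g (f a) ∂μ = ∫ b, g b ∂ν := by
  rw [← hf.map_eq, integral_map hf.measurable.aemeasurable (by rw [hf.map_eq]; exact hg)]

/-- Hoeffding's covariance formula:
`Cov(X, Y) = ∫∫ (P(X > x, Y > y) - P(X > x) P(Y > y)) dx dy`. -/
theorem cov_eq_integral_hoeffding
    {Ω : Type*} [MeasurableSpace Ω] (μ : Measure Ω) [IsProbabilityMeasure μ]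
    (X Y : Ω → ℝ) (hX : Measurable X) (hY : Measurable Y)
    (hX2 : MemLp X 2 μ) (hY2 : MemLp Y 2 μ) :
    cov μ X Y =
      ∫ x : ℝ, ∫ y : ℝ,
        ((μ {ω | X ω > x ∧ Y ω > y}).toReal
          - (μ {ω | X ω > x}).toReal * (μ {ω | Y ω > y}).toReal) := by
  set P2 : Measure (Ω × Ω) := μ.prod μ with hP2def
  set V2 : Measure (ℝ × ℝ) := (volume : Measure ℝ).prod volume with hV2def
  have hfstp : MeasurePreserving (Prod.fst : Ω × Ω → Ω) P2 μ :=
    ⟨measurable_fst, by simp [hP2def, Measure.map_fst_prod]⟩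
  have hsndp : MeasurePreserving (Prod.snd : Ω × Ω → Ω) P2 μ :=
    ⟨measurable_snd, by simp [hP2def, Measure.map_snd_prod]⟩
  have hX1 : MemLp (fun p : Ω × Ω => X p.1) 2 P2 := hX2.comp_measurePreserving hfstp
  have hX2' : MemLp (fun p : Ω × Ω => X p.2) 2 P2 := hX2.comp_measurePreserving hsndp
  have hY1 : MemLp (fun p : Ω × Ω => Y p.1) 2 P2 := hY2.comp_measurePreserving hfstp
  have hY2' : MemLp (fun p : Ω × Ω => Y p.2) 2 P2 := hY2.comp_measurePreserving hsndp
  set G : (Ω × Ω) → (ℝ × ℝ) → ℝ :=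
    fun p q => dstep (X p.1) (X p.2) q.1 * dstep (Y p.1) (Y p.2) q.2 with hGdef
  -- measurability of uncurried G
  have hGmeas : Measurable (Function.uncurry G) := by
    have m1 : ∀ (Z : Ω → ℝ), Measurable Z →
        Measurable (fun r : (Ω × Ω) × (ℝ × ℝ) => if r.2.1 < Z r.1.1 then (1:ℝ) else 0) :=
      fun Z hZ => Measurable.ite
        (measurableSet_lt measurable_snd.fst (hZ.comp measurable_fst.fst))
        measurable_const measurable_const
    have m2 : ∀ (Z : Ω → ℝ), Measurable Z →
        Measurable (fun r : (Ω × Ω) × (ℝ × ℝ) => if r.2.1 < Z r.1.2 then (1:ℝ) else 0) :=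
      fun Z hZ => Measurable.ite
        (measurableSet_lt measurable_snd.fst (hZ.comp measurable_fst.snd))
        measurable_const measurable_const
    have m3 : ∀ (Z : Ω → ℝ), Measurable Z →
        Measurable (fun r : (Ω × Ω) × (ℝ × ℝ) => if r.2.2 < Z r.1.1 then (1:ℝ) else 0) :=
      fun Z hZ => Measurable.ite
        (measurableSet_lt measurable_snd.snd (hZ.comp measurable_fst.fst))
        measurable_const measurable_const
    have m4 : ∀ (Z : Ω → ℝ), Measurable Z →
        Measurable (fun r : (Ω × Ω) × (ℝ × ℝ) => if r.2.2 < Z r.1.2 then (1:ℝ) else 0) :=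
      fun Z hZ => Measurable.ite
        (measurableSet_lt measurable_snd.snd (hZ.comp measurable_fst.snd))
        measurable_const measurable_const
    exact (((m1 X hX).sub (m2 X hX)).mul ((m3 Y hY).sub (m4 Y hY)))
  -- integrability of G on the big product
  have hGint : Integrable (Function.uncurry G) (P2.prod V2) := by
    refine (integrable_prod_iff hGmeas.aestronglyMeasurable).2 ⟨?_, ?_⟩
    · exact Filter.Eventually.of_forall fun p =>
        (integrable_dstep (X p.1) (X p.2)).mul_prod (integrable_dstep (Y p.1) (Y p.2))
    · have key : ∀ p : Ω × Ω,
          (∫ q : ℝ × ℝ, ‖Function.uncurry G (p, q)‖ ∂V2)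
            = |X p.1 - X p.2| * |Y p.1 - Y p.2| := by
        intro p
        have h1 : (fun q : ℝ × ℝ => ‖Function.uncurry G (p, q)‖)
            = fun q : ℝ × ℝ => |dstep (X p.1) (X p.2) q.1| * |dstep (Y p.1) (Y p.2) q.2| := by
          funext q; simp [Function.uncurry, hGdef, abs_mul, Real.norm_eq_abs]
        rw [h1, hV2def,
          show (∫ q : ℝ × ℝ, |dstep (X p.1) (X p.2) q.1| * |dstep (Y p.1) (Y p.2) q.2|
              ∂((volume : Measure ℝ).prod volume))
            = (∫ x, |dstep (X p.1) (X p.2) x|) * ∫ y, |dstep (Y p.1) (Y p.2) y| from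
            integral_prod_mul (fun x => |dstep (X p.1) (X p.2) x|)
              (fun y => |dstep (Y p.1) (Y p.2) y|),
          integral_abs_dstep, integral_abs_dstep]
      have hint : Integrable (fun p : Ω × Ω => |X p.1 - X p.2| * |Y p.1 - Y p.2|) P2 := by
        have h0 : Integrable (fun p : Ω × Ω => (X p.1 - X p.2) * (Y p.1 - Y p.2)) P2 :=
          memL2_mul_integrable (hX1.sub hX2') (hY1.sub hY2')
        have := h0.abs
        refine this.congr (Filter.Eventually.of_forall fun p => ?_)
        simp [abs_mul]
      exact hint.congr (Filter.Eventually.of_forall fun p => (key p).symm)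
  have hswap : (∫ p, ∫ q, G p q ∂V2 ∂P2) = ∫ q, ∫ p, G p q ∂P2 ∂V2 :=
    integral_integral_swap hGint
  -- LHS computation
  have hinner : ∀ p : Ω × Ω, (∫ q, G p q ∂V2) = (X p.1 - X p.2) * (Y p.1 - Y p.2) := by
    intro p
    rw [hV2def]
    rw [show (∫ q, G p q ∂((volume : Measure ℝ).prod volume))
        = (∫ x, dstep (X p.1) (X p.2) x) * ∫ y, dstep (Y p.1) (Y p.2) y from
      integral_prod_mul (dstep (X p.1) (X p.2)) (dstep (Y p.1) (Y p.2))]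
    rw [integral_dstep, integral_dstep]
  have i11 : Integrable (fun p : Ω × Ω => X p.1 * Y p.1) P2 := memL2_mul_integrable hX1 hY1
  have i12 : Integrable (fun p : Ω × Ω => X p.1 * Y p.2) P2 := memL2_mul_integrable hX1 hY2'
  have i21 : Integrable (fun p : Ω × Ω => Y p.1 * X p.2) P2 := memL2_mul_integrable hY1 hX2'
  have i22 : Integrable (fun p : Ω × Ω => X p.2 * Y p.2) P2 := memL2_mul_integrable hX2' hY2'
  have hXYm : AEStronglyMeasurable (fun ω => X ω * Y ω) μ :=
    (hX.mul hY).aestronglyMeasurable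
  have e11 : ∫ p : Ω × Ω, X p.1 * Y p.1 ∂P2 = ∫ ω, X ω * Y ω ∂μ :=
    integral_comp_mp hfstp hXYm
  have e22 : ∫ p : Ω × Ω, X p.2 * Y p.2 ∂P2 = ∫ ω, X ω * Y ω ∂μ :=
    integral_comp_mp hsndp hXYm
  have e12 : ∫ p : Ω × Ω, X p.1 * Y p.2 ∂P2 = (∫ ω, X ω ∂μ) * ∫ ω, Y ω ∂μ := by
    rw [hP2def]; exact integral_prod_mul X Y
  have e21 : ∫ p : Ω × Ω, Y p.1 * X p.2 ∂P2 = (∫ ω, Y ω ∂μ) * ∫ ω, X ω ∂μ := by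
    rw [hP2def]; exact integral_prod_mul Y X
  have hL : (∫ p, ∫ q, G p q ∂V2 ∂P2) = 2 * cov μ X Y := by
    have expand : ∀ p : Ω × Ω,
        (X p.1 - X p.2) * (Y p.1 - Y p.2)
          = X p.1 * Y p.1 - X p.1 * Y p.2 - Y p.1 * X p.2 + X p.2 * Y p.2 := fun p => by ring
    simp only [hinner, expand]
    have ia : Integrable (fun p : Ω × Ω => X p.1 * Y p.1 - X p.1 * Y p.2) P2 := i11.sub i12
    have ib : Integrable
        (fun p : Ω × Ω => X p.1 * Y p.1 - X p.1 * Y p.2 - Y p.1 * X p.2) P2 := ia.sub i21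
    rw [integral_add ib i22, integral_sub ia i21, integral_sub i11 i12, e11, e12, e21, e22]
    simp only [cov]; ring
  -- RHS inner computation
  have hind : ∀ q : ℝ × ℝ, (∫ p, G p q ∂P2)
      = 2 * ((μ {ω | X ω > q.1 ∧ Y ω > q.2}).toReal
          - (μ {ω | X ω > q.1}).toReal * (μ {ω | Y ω > q.2}).toReal) := by
    intro q
    set sX : Set Ω := {ω | X ω > q.1} with hsXdef
    set sY : Set Ω := {ω | Y ω > q.2} with hsYdef
    have hsX : MeasurableSet sX := measurableSet_lt measurable_const hX
    have hsY : MeasurableSet sY := measurableSet_lt measurable_const hY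
    have hsXY : {ω | X ω > q.1 ∧ Y ω > q.2} = sX ∩ sY := rfl
    have hG : ∀ p : Ω × Ω, G p q
        = (sX ∩ sY).indicator (1 : Ω → ℝ) p.1
          - sX.indicator (1 : Ω → ℝ) p.1 * sY.indicator (1 : Ω → ℝ) p.2
          - sY.indicator (1 : Ω → ℝ) p.1 * sX.indicator (1 : Ω → ℝ) p.2
          + (sX ∩ sY).indicator (1 : Ω → ℝ) p.2 := by
      intro p
      rw [← mul_ind sX sY p.1, ← mul_ind sX sY p.2]
      simp only [hGdef, dstep, indicator_apply, hsXdef, hsYdef, mem_setOf_eq, gt_iff_lt,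
        Pi.one_apply]
      ring
    have indm : ∀ (s : Set Ω), MeasurableSet s →
        AEStronglyMeasurable (s.indicator (1 : Ω → ℝ)) μ :=
      fun s hs =>
        (measurable_const.indicator hs : Measurable (s.indicator (1 : Ω → ℝ))).aestronglyMeasurable
    have j11 : Integrable (fun p : Ω × Ω => (sX ∩ sY).indicator (1 : Ω → ℝ) p.1) P2 :=
      (hfstp.integrable_comp (indm _ (hsX.inter hsY))).2 (ind_integrable (hsX.inter hsY))
    have j22 : Integrable (fun p : Ω × Ω => (sX ∩ sY).indicator (1 : Ω → ℝ) p.2) P2 :=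
      (hsndp.integrable_comp (indm _ (hsX.inter hsY))).2 (ind_integrable (hsX.inter hsY))
    have j12 : Integrable (fun p : Ω × Ω => sX.indicator (1 : Ω → ℝ) p.1 * sY.indicator (1 : Ω → ℝ) p.2) P2 := by
      rw [hP2def]; exact (ind_integrable (μ := μ) hsX).mul_prod (ind_integrable (μ := μ) hsY)
    have j21 : Integrable (fun p : Ω × Ω => sY.indicator (1 : Ω → ℝ) p.1 * sX.indicator (1 : Ω → ℝ) p.2) P2 := by
      rw [hP2def]; exact (ind_integrable (μ := μ) hsY).mul_prod (ind_integrable (μ := μ) hsX)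
    have k11 : ∫ p : Ω × Ω, (sX ∩ sY).indicator (1 : Ω → ℝ) p.1 ∂P2 = (μ (sX ∩ sY)).toReal := by
      rw [integral_comp_mp hfstp (indm _ (hsX.inter hsY)), integral_indicator_one (hsX.inter hsY), measureReal_def]
    have k22 : ∫ p : Ω × Ω, (sX ∩ sY).indicator (1 : Ω → ℝ) p.2 ∂P2 = (μ (sX ∩ sY)).toReal := by
      rw [integral_comp_mp hsndp (indm _ (hsX.inter hsY)), integral_indicator_one (hsX.inter hsY), measureReal_def]
    have k12 : ∫ p : Ω × Ω, sX.indicator (1 : Ω → ℝ) p.1 * sY.indicator (1 : Ω → ℝ) p.2 ∂P2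
        = (μ sX).toReal * (μ sY).toReal := by
      rw [hP2def, integral_prod_mul (sX.indicator (1 : Ω → ℝ)) (sY.indicator (1 : Ω → ℝ)), integral_indicator_one hsX, integral_indicator_one hsY, measureReal_def, measureReal_def]
    have k21 : ∫ p : Ω × Ω, sY.indicator (1 : Ω → ℝ) p.1 * sX.indicator (1 : Ω → ℝ) p.2 ∂P2
        = (μ sY).toReal * (μ sX).toReal := by
      rw [hP2def, integral_prod_mul (sY.indicator (1 : Ω → ℝ)) (sX.indicator (1 : Ω → ℝ)), integral_indicator_one hsY, integral_indicator_one hsX, measureReal_def, measureReal_def]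
    calc (∫ p, G p q ∂P2)
        = ∫ p : Ω × Ω, ((sX ∩ sY).indicator (1 : Ω → ℝ) p.1
            - sX.indicator (1 : Ω → ℝ) p.1 * sY.indicator (1 : Ω → ℝ) p.2
            - sY.indicator (1 : Ω → ℝ) p.1 * sX.indicator (1 : Ω → ℝ) p.2
            + (sX ∩ sY).indicator (1 : Ω → ℝ) p.2) ∂P2 := by simp only [hG]
      _ = (μ (sX ∩ sY)).toReal - (μ sX).toReal * (μ sY).toReal
            - (μ sY).toReal * (μ sX).toReal + (μ (sX ∩ sY)).toReal := by
          have ja : Integrable (fun p : Ω × Ω => (sX ∩ sY).indicator (1 : Ω → ℝ) p.1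
              - sX.indicator (1 : Ω → ℝ) p.1 * sY.indicator (1 : Ω → ℝ) p.2) P2 := j11.sub j12
          have jb : Integrable (fun p : Ω × Ω => (sX ∩ sY).indicator (1 : Ω → ℝ) p.1
              - sX.indicator (1 : Ω → ℝ) p.1 * sY.indicator (1 : Ω → ℝ) p.2
              - sY.indicator (1 : Ω → ℝ) p.1 * sX.indicator (1 : Ω → ℝ) p.2) P2 := ja.sub j21
          rw [integral_add jb j22, integral_sub ja j21, integral_sub j11 j12,
            k11, k12, k21, k22]
      _ = 2 * ((μ {ω | X ω > q.1 ∧ Y ω > q.2}).toReal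
            - (μ {ω | X ω > q.1}).toReal * (μ {ω | Y ω > q.2}).toReal) := by
          rw [hsXY]; ring
  -- integrability of H on V2
  have hHint : Integrable (fun q : ℝ × ℝ =>
      (μ {ω | X ω > q.1 ∧ Y ω > q.2}).toReal
        - (μ {ω | X ω > q.1}).toReal * (μ {ω | Y ω > q.2}).toReal) V2 := by
    have h2 : Integrable (fun q : ℝ × ℝ => ∫ p, Function.uncurry G (p, q) ∂P2) V2 :=
      hGint.integral_prod_right
    have h3 : Integrable (fun q : ℝ × ℝ =>
        2 * ((μ {ω | X ω > q.1 ∧ Y ω > q.2}).toReal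
          - (μ {ω | X ω > q.1}).toReal * (μ {ω | Y ω > q.2}).toReal)) V2 :=
      h2.congr (Filter.Eventually.of_forall fun q => hind q)
    have := h3.const_mul (1/2)
    refine this.congr (Filter.Eventually.of_forall fun q => ?_)
    ring
  -- conclude
  have hR : (∫ q, ∫ p, G p q ∂P2 ∂V2)
      = 2 * ∫ x : ℝ, ∫ y : ℝ,
          ((μ {ω | X ω > x ∧ Y ω > y}).toReal
            - (μ {ω | X ω > x}).toReal * (μ {ω | Y ω > y}).toReal) := by
    calc (∫ q, ∫ p, G p q ∂P2 ∂V2)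
        = ∫ q : ℝ × ℝ, 2 * ((μ {ω | X ω > q.1 ∧ Y ω > q.2}).toReal
            - (μ {ω | X ω > q.1}).toReal * (μ {ω | Y ω > q.2}).toReal) ∂V2 := by
          exact integral_congr_ae (Filter.Eventually.of_forall fun q => hind q)
      _ = 2 * ∫ q : ℝ × ℝ, ((μ {ω | X ω > q.1 ∧ Y ω > q.2}).toReal
            - (μ {ω | X ω > q.1}).toReal * (μ {ω | Y ω > q.2}).toReal) ∂V2 :=
          integral_const_mul 2 _
      _ = 2 * ∫ x : ℝ, ∫ y : ℝ,
            ((μ {ω | X ω > x ∧ Y ω > y}).toReal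
              - (μ {ω | X ω > x}).toReal * (μ {ω | Y ω > y}).toReal) := by
          rw [hV2def] at hHint ⊢
          rw [integral_prod _ hHint]
  have := hswap
  rw [hL, hR] at this
  linarith
end

section
/- Let X and Y be real-valued random variables with X ≥ a and Y ≥ a almost surely for some real number a, such that E[(X−a)(Y−a)] < ∞. Then ∫_a^∞ ∫_a^∞ P(X > x, Y > y) dx dy = E[(X − a)(Y − a)]. -/
open MeasureTheory ProbabilityTheory
open scoped ENNReal

/-- Shifted layercake: if `a ≤ Y` a.e., then `∫⁻ y in (a,∞), m {Y > y} = ∫⁻ ω, (Y ω - a) ∂m`. -/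
lemma aux_layercake {Ω : Type*} [MeasurableSpace Ω] (m : Measure Ω)
    (Y : Ω → ℝ) (hY : Measurable Y) (a : ℝ) (h : ∀ᵐ ω ∂m, a ≤ Y ω) :
    ∫⁻ y in Set.Ioi a, m {ω | Y ω > y} = ∫⁻ ω, ENNReal.ofReal (Y ω - a) ∂m := by
  have hmap : volume.restrict (Set.Ioi a) =
      Measure.map (fun t : ℝ => t + a) (volume.restrict (Set.Ioi (0 : ℝ))) := by
    rw [show Set.Ioi (0:ℝ) = (fun t : ℝ => t + a) ⁻¹' Set.Ioi a by
      ext t; simp [lt_add_iff_pos_left] ]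
    rw [← Measure.restrict_map (measurable_add_const a) measurableSet_Ioi,
      map_add_right_eq_self volume a]
  have hmeas : Measurable fun y => m {ω | Y ω > y} := by
    apply Antitone.measurable
    intro y₁ y₂ hle
    exact measure_mono fun ω hω => lt_of_le_of_lt hle hω
  rw [hmap, lintegral_map hmeas (measurable_add_const a),
    lintegral_eq_lintegral_meas_lt m (h.mono fun ω hω => by simpa using sub_nonneg.2 hω)
      (show AEMeasurable (fun ω => Y ω - a) m from (hY.sub measurable_const).aemeasurable)]
  apply lintegral_congr_ae
  filter_upwards with t
  congr 1
  ext ω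
  simp only [Set.mem_setOf_eq, gt_iff_lt]
  constructor <;> intro <;> linarith

/-- The Fubini computation underlying Hoeffding's covariance formula: if `X ≥ a` and `Y ≥ a`
almost surely and `(X - a)(Y - a)` is integrable, then
`∫_a^∞ ∫_a^∞ P(X > x, Y > y) dx dy = E[(X - a)(Y - a)]`. -/
theorem integral_tail_prob_eq_expectation
    {Ω : Type*} [MeasurableSpace Ω] (μ : Measure Ω) [IsProbabilityMeasure μ]
    (X Y : Ω → ℝ) (hX : Measurable X) (hY : Measurable Y) (a : ℝ)
    (hXa : ∀ᵐ ω ∂μ, a ≤ X ω) (hYa : ∀ᵐ ω ∂μ, a ≤ Y ω)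
    (hint : Integrable (fun ω => (X ω - a) * (Y ω - a)) μ) :
    ∫ x in Set.Ioi a, ∫ y in Set.Ioi a, (μ {ω | X ω > x ∧ Y ω > y}).toReal
      = ∫ ω, (X ω - a) * (Y ω - a) ∂μ := by
  set w : Ω → ℝ≥0∞ := fun ω => ENNReal.ofReal (Y ω - a) with hw
  set ν : Measure Ω := μ.withDensity w with hν
  have hw_meas : Measurable w := (hY.sub measurable_const).ennreal_ofReal
  have h_nonneg : ∀ᵐ ω ∂μ, 0 ≤ (X ω - a) * (Y ω - a) := by
    filter_upwards [hXa, hYa] with ω h1 h2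
    exact mul_nonneg (by linarith) (by linarith)
  -- step 1: inner lintegral
  have step1 : ∀ x : ℝ, ∫⁻ y in Set.Ioi a, μ {ω | X ω > x ∧ Y ω > y} = ν {ω | X ω > x} := by
    intro x
    have hXx : MeasurableSet {ω | X ω > x} := measurableSet_lt measurable_const hX
    have : ∀ y : ℝ, μ {ω | X ω > x ∧ Y ω > y} = (μ.restrict {ω | X ω > x}) {ω | Y ω > y} := by
      intro y
      rw [Measure.restrict_apply (measurableSet_lt measurable_const hY)]
      congr 1
      ext ω; simp [Set.mem_setOf_eq, and_comm]
    simp_rw [this]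
    rw [aux_layercake (μ.restrict {ω | X ω > x}) Y hY a (ae_restrict_of_ae hYa)]
    rw [hν, withDensity_apply _ hXx]
  -- step 2: outer lintegral equals lintegral over ν
  have hXa_ν : ∀ᵐ ω ∂ν, a ≤ X ω :=
    (withDensity_absolutelyContinuous μ w).ae_le hXa
  have step2 : ∫⁻ x in Set.Ioi a, ν {ω | X ω > x} = ∫⁻ ω, ENNReal.ofReal (X ω - a) ∂ν :=
    aux_layercake ν X hX a hXa_ν
  -- step 3: unfold the density
  have step3 : ∫⁻ ω, ENNReal.ofReal (X ω - a) ∂ν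
      = ∫⁻ ω, ENNReal.ofReal ((X ω - a) * (Y ω - a)) ∂μ := by
    rw [hν, lintegral_withDensity_eq_lintegral_mul μ hw_meas
      (show Measurable (fun ω => ENNReal.ofReal (X ω - a)) from
        (hX.sub measurable_const).ennreal_ofReal)]
    apply lintegral_congr_ae
    filter_upwards [hXa] with ω h1
    simp only [Pi.mul_apply, hw]
    rw [ENNReal.ofReal_mul (by linarith), mul_comm]
  -- step 5: total is ofReal of the expectation
  have step5 : ∫⁻ ω, ENNReal.ofReal ((X ω - a) * (Y ω - a)) ∂μ
      = ENNReal.ofReal (∫ ω, (X ω - a) * (Y ω - a) ∂μ) :=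
    (ofReal_integral_eq_lintegral_ofReal hint h_nonneg).symm
  have h_fin : ∫⁻ x in Set.Ioi a, ν {ω | X ω > x} ≠ ⊤ := by
    rw [step2, step3, step5]; exact ENNReal.ofReal_ne_top
  -- measurability of x ↦ ν {X > x}
  have hνX_meas : Measurable fun x => ν {ω | X ω > x} := by
    apply Antitone.measurable
    intro x₁ x₂ hle
    exact measure_mono fun ω hω => lt_of_le_of_lt hle hω
  -- convert real integrals
  have inner_eq : ∀ x : ℝ,
      ∫ y in Set.Ioi a, (μ {ω | X ω > x ∧ Y ω > y}).toReal = (ν {ω | X ω > x}).toReal := by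
    intro x
    rw [← step1 x]
    apply integral_toReal
    · apply Measurable.aemeasurable
      apply Antitone.measurable
      intro y₁ y₂ hle
      exact measure_mono fun ω hω => ⟨hω.1, lt_of_le_of_lt hle hω.2⟩
    · filter_upwards with y
      exact lt_of_le_of_lt prob_le_one ENNReal.one_lt_top
  simp_rw [inner_eq]
  rw [integral_toReal hνX_meas.aemeasurable (ae_lt_top hνX_meas h_fin)]
  rw [step2, step3, step5, ENNReal.toReal_ofReal (integral_nonneg_of_ae h_nonneg)]
end

section
/- Let X and Y be two associated real-valued random variables with finite variance, and let f and g be continuously differentiable complex-valued functions on ℝ with bounded derivatives f′ and g′. Then |Cov(f(X), g(Y))| ≤ ‖f′‖_∞ · ‖g′‖_∞ · Cov(X, Y), where ‖·‖_∞ denotes the supremum norm (Newman's covariance inequality). -/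
open MeasureTheory ProbabilityTheory

/-- Complex covariance `E(U V̄) - E(U) E(V̄)`. -/
noncomputable def covC {Ω : Type*} [MeasurableSpace Ω] (μ : Measure Ω) (U V : Ω → ℂ) : ℂ :=
  (∫ ω, U ω * (starRingEnd ℂ) (V ω) ∂μ)
    - (∫ ω, U ω ∂μ) * (starRingEnd ℂ) (∫ ω, V ω ∂μ)

/-- A finite family of random variables is associated if every pair of coordinatewise
nondecreasing measurable functions of it with square-integrable compositions has
nonnegative covariance. -/
def IsAssociated {Ω : Type*} [MeasurableSpace Ω] (μ : Measure Ω) {n : ℕ}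
    (X : Fin n → Ω → ℝ) : Prop :=
  ∀ f g : (Fin n → ℝ) → ℝ, Monotone f → Monotone g → Measurable f → Measurable g →
    MemLp (fun ω => f (fun i => X i ω)) 2 μ →
    MemLp (fun ω => g (fun i => X i ω)) 2 μ →
    0 ≤ cov μ (fun ω => f (fun i => X i ω)) (fun ω => g (fun i => X i ω))

noncomputable def kk (s x : ℝ) : ℝ := if s < x then 1 else 0

lemma kk_mono (s : ℝ) : Monotone (kk s) := by
  intro a b hab
  unfold kk
  split_ifs with h1 h2 h2 <;> simp_all <;> linarith

lemma kk_nonneg (s x : ℝ) : 0 ≤ kk s x := by unfold kk; split_ifs <;> norm_num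

lemma kk_le_one (s x : ℝ) : kk s x ≤ 1 := by unfold kk; split_ifs <;> norm_num

lemma kk_meas2 : Measurable (fun q : ℝ × ℝ => kk q.1 q.2) := by
  unfold kk
  exact Measurable.ite (measurableSet_lt measurable_fst measurable_snd)
    measurable_const measurable_const

lemma kk_meas (s : ℝ) : Measurable (kk s) :=
  kk_meas2.comp (measurable_const.prodMk measurable_id)

lemma kk_memℒp {Ω : Type*} [MeasurableSpace Ω] {μ : Measure Ω} [IsFiniteMeasure μ]
    {X : Ω → ℝ} (hX : Measurable X) (s : ℝ) :
    MemLp (fun ω => kk s (X ω)) 2 μ := by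
  refine MemLp.of_bound ((kk_meas s).comp hX).aestronglyMeasurable 1 (ae_of_all _ fun ω => ?_)
  rw [Real.norm_eq_abs, abs_of_nonneg (kk_nonneg _ _)]
  exact kk_le_one _ _

lemma kk_sub_indicator {x y : ℝ} (h : y ≤ x) (s : ℝ) :
    kk s x - kk s y = (Set.Ico y x).indicator (fun _ => (1:ℝ)) s := by
  unfold kk
  by_cases hs : s ∈ Set.Ico y x
  · rw [Set.indicator_of_mem hs]
    obtain ⟨h1, h2⟩ := hs
    rw [if_pos h2, if_neg (by linarith)]
    norm_num
  · rw [Set.indicator_of_notMem hs]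
    simp only [Set.mem_Ico, not_and_or, not_le, not_lt] at hs
    rcases hs with hs | hs
    · rw [if_pos (by linarith), if_pos hs]; ring
    · rw [if_neg (by linarith), if_neg (by linarith)]; ring

section KK

variable {E : Type*} [NormedAddCommGroup E] [NormedSpace ℝ E]

lemma kk_smul_eq_indicator {c : ℝ → E} {x y : ℝ} (h : y ≤ x) :
    (fun s => (kk s x - kk s y) • c s) = (Set.Ico y x).indicator c := by
  funext s
  rw [kk_sub_indicator h]
  by_cases hs : s ∈ Set.Ico y x
  · rw [Set.indicator_of_mem hs, Set.indicator_of_mem hs, one_smul]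
  · rw [Set.indicator_of_notMem hs, Set.indicator_of_notMem hs, zero_smul]

lemma kk_smul_integrable {c : ℝ → E} (hc : Continuous c) (x y : ℝ) :
    Integrable (fun s => (kk s x - kk s y) • c s) := by
  rcases le_total y x with h | h
  · rw [kk_smul_eq_indicator h]
    exact ((hc.integrableOn_Icc).mono_set Set.Ico_subset_Icc_self).integrable_indicator
      measurableSet_Ico
  · have h2 : (fun s => (kk s x - kk s y) • c s) = fun s => -((kk s y - kk s x) • c s) := by
      funext s; rw [← neg_smul]; ring_nf
    rw [h2]
    refine Integrable.neg ?_
    rw [kk_smul_eq_indicator h]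
    exact ((hc.integrableOn_Icc).mono_set Set.Ico_subset_Icc_self).integrable_indicator
      measurableSet_Ico

lemma kk_smul_integral [CompleteSpace E] {c : ℝ → E} (hc : Continuous c) (x y : ℝ) :
    ∫ s, (kk s x - kk s y) • c s = ∫ s in y..x, c s := by
  have key : ∀ {a b : ℝ}, a ≤ b → ∫ s, (kk s b - kk s a) • c s = ∫ s in a..b, c s := by
    intro a b h
    rw [kk_smul_eq_indicator h, integral_indicator measurableSet_Ico,
      MeasureTheory.integral_Ico_eq_integral_Ioo,
      intervalIntegral.integral_of_le h, MeasureTheory.integral_Ioc_eq_integral_Ioo]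
  rcases le_total y x with h | h
  · exact key h
  · have h2 : (fun s => (kk s x - kk s y) • c s) = fun s => -((kk s y - kk s x) • c s) := by
      funext s; rw [← neg_smul]; ring_nf
    rw [h2, integral_neg, key h, ← intervalIntegral.integral_symm]

lemma kk_ftc [CompleteSpace E] {f : ℝ → E} (hf : ContDiff ℝ 1 f) (x y : ℝ) :
    f x - f y = ∫ s, (kk s x - kk s y) • deriv f s := by
  rw [kk_smul_integral (hf.continuous_deriv le_rfl)]
  exact (intervalIntegral.integral_deriv_eq_sub
    (fun t _ => (hf.differentiable one_ne_zero).differentiableAt)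
    ((hf.continuous_deriv le_rfl).intervalIntegrable y x)).symm

end KK

lemma kk_abs_integrable (x y : ℝ) : Integrable (fun s => |kk s x - kk s y|) := by
  have := (kk_smul_integrable (c := fun _ => (1:ℝ)) continuous_const x y).abs
  simpa [smul_eq_mul] using this

lemma kk_abs_integral (x y : ℝ) : ∫ s, |kk s x - kk s y| = |x - y| := by
  have key : ∀ {a b : ℝ}, a ≤ b → ∫ s, |kk s b - kk s a| = |b - a| := by
    intro a b h
    have h1 : (fun s => |kk s b - kk s a|) = fun s => (kk s b - kk s a) • (1:ℝ) := by
      funext s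
      rw [kk_sub_indicator h, smul_eq_mul, mul_one]
      exact abs_of_nonneg (Set.indicator_nonneg (fun _ _ => zero_le_one) s)
    rw [h1, kk_smul_integral continuous_const, intervalIntegral.integral_const, smul_eq_mul,
      mul_one, abs_of_nonneg (sub_nonneg.mpr h)]
  rcases le_total y x with h | h
  · exact key h
  · rw [abs_sub_comm]
    rw [show (fun s => |kk s x - kk s y|) = fun s => |kk s y - kk s x| by
      funext s; rw [abs_sub_comm]]
    exact key h

lemma mul_int {Ω 𝕜 : Type*} [MeasurableSpace Ω] {μ : Measure Ω} [RCLike 𝕜] {u v : Ω → 𝕜}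
    (hu : MemLp u 2 μ) (hv : MemLp v 2 μ) : Integrable (fun ω => u ω * v ω) μ := by
  refine Integrable.mono' (((memLp_two_iff_integrable_sq_norm hu.1).mp hu).add
    ((memLp_two_iff_integrable_sq_norm hv.1).mp hv)) (hu.1.mul hv.1) (ae_of_all _ fun ω => ?_)
  simp only [Pi.add_apply, norm_mul]
  nlinarith [norm_nonneg (u ω), norm_nonneg (v ω), sq_nonneg (‖u ω‖ - ‖v ω‖)]

lemma memℒp_conj {Ω 𝕜 : Type*} [MeasurableSpace Ω] {μ : Measure Ω} [RCLike 𝕜] {v : Ω → 𝕜}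
    (hv : MemLp v 2 μ) : MemLp (fun ω => (starRingEnd 𝕜) (v ω)) 2 μ := by
  refine MemLp.of_le_mul (c := 1) hv
    (RCLike.continuous_conj.comp_aestronglyMeasurable hv.1) (ae_of_all _ fun ω => ?_)
  rw [RCLike.norm_conj, one_mul]

section CovProd

variable {Ω : Type*} [MeasurableSpace Ω] {μ : Measure Ω} [IsProbabilityMeasure μ]
variable {𝕜 : Type*} [RCLike 𝕜]

lemma integral_fst_prod (F : Ω → 𝕜) :
    ∫ p, F p.1 ∂(μ.prod μ) = ∫ ω, F ω ∂μ := by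
  have := MeasureTheory.integral_prod_mul (μ := μ) (ν := μ) F (fun _ => (1:𝕜))
  simpa using this

lemma integral_snd_prod (F : Ω → 𝕜) :
    ∫ p, F p.2 ∂(μ.prod μ) = ∫ ω, F ω ∂μ := by
  have := MeasureTheory.integral_prod_mul (μ := μ) (ν := μ) (fun _ => (1:𝕜)) F
  simpa using this

lemma integrable_fst_prod {F : Ω → 𝕜} (hF : Integrable F μ) :
    Integrable (fun p : Ω × Ω => F p.1) (μ.prod μ) := by
  simpa using hF.mul_prod (integrable_const (1:𝕜))

lemma integrable_snd_prod {F : Ω → 𝕜} (hF : Integrable F μ) :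
    Integrable (fun p : Ω × Ω => F p.2) (μ.prod μ) := by
  simpa using (integrable_const (1:𝕜)).mul_prod hF

lemma cov_prod (U V : Ω → 𝕜) (hU : MemLp U 2 μ) (hV : MemLp V 2 μ) :
    ∫ p, (U p.1 - U p.2) * (starRingEnd 𝕜) (V p.1 - V p.2) ∂(μ.prod μ)
      = 2 * ((∫ ω, U ω * (starRingEnd 𝕜) (V ω) ∂μ)
          - (∫ ω, U ω ∂μ) * (starRingEnd 𝕜) (∫ ω, V ω ∂μ)) := by
  have hVc : MemLp (fun ω => (starRingEnd 𝕜) (V ω)) 2 μ := memℒp_conj hV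
  have hUi : Integrable U μ := hU.integrable one_le_two
  have hVci : Integrable (fun ω => (starRingEnd 𝕜) (V ω)) μ := hVc.integrable one_le_two
  have hG : Integrable (fun ω => U ω * (starRingEnd 𝕜) (V ω)) μ := mul_int hU hVc
  have h1 : Integrable (fun p : Ω × Ω => U p.1 * (starRingEnd 𝕜) (V p.1)) (μ.prod μ) :=
    integrable_fst_prod hG
  have h4 : Integrable (fun p : Ω × Ω => U p.2 * (starRingEnd 𝕜) (V p.2)) (μ.prod μ) :=
    integrable_snd_prod hG
  have h2 : Integrable (fun p : Ω × Ω => U p.1 * (starRingEnd 𝕜) (V p.2)) (μ.prod μ) :=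
    hUi.mul_prod hVci
  have h3 : Integrable (fun p : Ω × Ω => (starRingEnd 𝕜) (V p.1) * U p.2) (μ.prod μ) :=
    hVci.mul_prod hUi
  have hexp : (fun p : Ω × Ω => (U p.1 - U p.2) * (starRingEnd 𝕜) (V p.1 - V p.2))
      = fun p => U p.1 * (starRingEnd 𝕜) (V p.1) - U p.1 * (starRingEnd 𝕜) (V p.2)
          - (starRingEnd 𝕜) (V p.1) * U p.2 + U p.2 * (starRingEnd 𝕜) (V p.2) := by
    funext p; rw [map_sub]; ring
  have h12 : Integrable (fun p : Ω × Ω =>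
      U p.1 * (starRingEnd 𝕜) (V p.1) - U p.1 * (starRingEnd 𝕜) (V p.2)) (μ.prod μ) := h1.sub h2
  have h123 : Integrable (fun p : Ω × Ω =>
      U p.1 * (starRingEnd 𝕜) (V p.1) - U p.1 * (starRingEnd 𝕜) (V p.2)
        - (starRingEnd 𝕜) (V p.1) * U p.2) (μ.prod μ) := h12.sub h3
  rw [hexp, integral_add h123 h4, integral_sub h12 h3,
    integral_sub h1 h2, integral_fst_prod (fun ω => U ω * (starRingEnd 𝕜) (V ω)),
    integral_snd_prod (fun ω => U ω * (starRingEnd 𝕜) (V ω)),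
    MeasureTheory.integral_prod_mul U (fun ω => (starRingEnd 𝕜) (V ω)),
    MeasureTheory.integral_prod_mul (fun ω => (starRingEnd 𝕜) (V ω)) U,
    integral_conj]
  ring

end CovProd

lemma memℒp_comp_contDiff {Ω : Type*} [MeasurableSpace Ω] {μ : Measure Ω} [IsFiniteMeasure μ]
    {𝕜 : Type*} [RCLike 𝕜]
    {X : Ω → ℝ} (hX : Measurable X) (hX2 : MemLp X 2 μ)
    {f : ℝ → 𝕜} (hf : ContDiff ℝ 1 f) {A : ℝ} (hA : ∀ x, ‖deriv f x‖ ≤ A) :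
    MemLp (fun ω => f (X ω)) 2 μ := by
  have hlip : LipschitzWith A.toNNReal f :=
    lipschitzWith_of_nnnorm_deriv_le (hf.differentiable one_ne_zero) (fun x => by
      rw [← NNReal.coe_le_coe, coe_nnnorm, Real.coe_toNNReal']
      exact (hA x).trans (le_max_left _ _))
  have hmeas : AEStronglyMeasurable (fun ω => f (X ω)) μ :=
    (hf.continuous.measurable.comp hX).aestronglyMeasurable
  have h1 : MemLp (fun ω => f (X ω) - f 0) 2 μ := by
    refine MemLp.of_le_mul (c := (A.toNNReal : ℝ)) hX2
      (hmeas.sub aestronglyMeasurable_const) (ae_of_all _ fun ω => ?_)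
    have h := hlip.dist_le_mul (X ω) 0
    rw [dist_eq_norm, dist_eq_norm] at h
    simpa [Real.norm_eq_abs] using h
  have h2 := h1.add (memLp_const (f 0))
  have h3 : (fun ω => f (X ω)) = ((fun ω => f (X ω) - f 0) + fun _ => f 0) := by
    funext ω; simp
  rw [h3]; exact h2

/-- The master Hoeffding-type identity. -/
lemma master {Ω : Type*} [MeasurableSpace Ω] (μ : Measure Ω) [IsProbabilityMeasure μ]
    {𝕜 : Type*} [RCLike 𝕜]
    (X Y : Ω → ℝ) (hX : Measurable X) (hY : Measurable Y)
    (hX2 : MemLp X 2 μ) (hY2 : MemLp Y 2 μ)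
    (f g : ℝ → 𝕜) (hf : ContDiff ℝ 1 f) (hg : ContDiff ℝ 1 g)
    {A B : ℝ} (hA : ∀ x, ‖deriv f x‖ ≤ A) (hB : ∀ x, ‖deriv g x‖ ≤ B) :
    ((∫ ω, f (X ω) * (starRingEnd 𝕜) (g (Y ω)) ∂μ)
      - (∫ ω, f (X ω) ∂μ) * (starRingEnd 𝕜) (∫ ω, g (Y ω) ∂μ))
      = (∫ σ : ℝ × ℝ, (cov μ (fun ω => kk σ.1 (X ω)) (fun ω => kk σ.2 (Y ω)))
          • (deriv f σ.1 * (starRingEnd 𝕜) (deriv g σ.2))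
          ∂((volume : Measure ℝ).prod volume))
    ∧ Integrable (fun σ : ℝ × ℝ => (cov μ (fun ω => kk σ.1 (X ω)) (fun ω => kk σ.2 (Y ω)))
          • (deriv f σ.1 * (starRingEnd 𝕜) (deriv g σ.2)))
        ((volume : Measure ℝ).prod volume) := by
  set ν : Measure (Ω × Ω) := μ.prod μ with hν
  set τ : Measure (ℝ × ℝ) := (volume : Measure ℝ).prod volume with hτ
  set c : ℝ × ℝ → 𝕜 := fun σ => deriv f σ.1 * (starRingEnd 𝕜) (deriv g σ.2) with hc
  set Δ : ℝ × ℝ → Ω × Ω → ℝ := fun σ p =>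
    (kk σ.1 (X p.1) - kk σ.1 (X p.2)) * (kk σ.2 (Y p.1) - kk σ.2 (Y p.2)) with hΔ
  set Ψ : Ω × Ω → ℝ × ℝ → 𝕜 := fun p σ => Δ σ p • c σ with hΨ
  have hf' := hf.continuous_deriv le_rfl
  have hg' := hg.continuous_deriv le_rfl
  have hccont : Continuous c :=
    (hf'.comp continuous_fst).mul (RCLike.continuous_conj.comp (hg'.comp continuous_snd))
  -- pointwise identity
  have step1 : ∀ p : Ω × Ω,
      (f (X p.1) - f (X p.2)) * (starRingEnd 𝕜) (g (Y p.1) - g (Y p.2))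
        = ∫ σ, Ψ p σ ∂τ := by
    intro p
    have e1 : f (X p.1) - f (X p.2)
        = ∫ s, (kk s (X p.1) - kk s (X p.2)) • deriv f s := kk_ftc hf _ _
    have e2 : (starRingEnd 𝕜) (g (Y p.1) - g (Y p.2))
        = ∫ t, (kk t (Y p.1) - kk t (Y p.2)) • (starRingEnd 𝕜) (deriv g t) := by
      rw [kk_ftc hg (Y p.1) (Y p.2), ← integral_conj]
      congr 1
      funext t
      rw [RCLike.real_smul_eq_coe_mul, RCLike.real_smul_eq_coe_mul, map_mul, RCLike.conj_ofReal]
    rw [e1, e2, ← MeasureTheory.integral_prod_mul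
      (fun s => (kk s (X p.1) - kk s (X p.2)) • deriv f s)
      (fun t => (kk t (Y p.1) - kk t (Y p.2)) • (starRingEnd 𝕜) (deriv g t))]
    congr 1
    funext σ
    show _ = Δ σ p • c σ
    rw [hΔ, hc]
    simp only [smul_mul_smul_comm]
  -- measurability of Ψ on the product space
  have hΨm : AEStronglyMeasurable (fun q : (Ω × Ω) × ℝ × ℝ => Ψ q.1 q.2) (ν.prod τ) := by
    have hΔm : Measurable (fun q : (Ω × Ω) × ℝ × ℝ => Δ q.2 q.1) := by
      apply Measurable.mul
      · exact (kk_meas2.comp (((measurable_fst.comp measurable_snd)).prodMk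
          (hX.comp (measurable_fst.comp measurable_fst)))).sub
          (kk_meas2.comp (((measurable_fst.comp measurable_snd)).prodMk
          (hX.comp (measurable_snd.comp measurable_fst))))
      · exact (kk_meas2.comp (((measurable_snd.comp measurable_snd)).prodMk
          (hY.comp (measurable_fst.comp measurable_fst)))).sub
          (kk_meas2.comp (((measurable_snd.comp measurable_snd)).prodMk
          (hY.comp (measurable_snd.comp measurable_fst))))
    have hcm : Measurable (fun q : (Ω × Ω) × ℝ × ℝ => c q.2) :=
      (hccont.measurable).comp measurable_snd
    have : Measurable (fun q : (Ω × Ω) × ℝ × ℝ => Ψ q.1 q.2) := by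
      simp only [hΨ, RCLike.real_smul_eq_coe_mul]
      exact Measurable.mul (M := 𝕜) ((RCLike.measurable_ofReal (𝕜 := 𝕜)).comp hΔm) hcm
    exact this.aestronglyMeasurable
  -- sectionwise integrability
  have hint_p : ∀ p : Ω × Ω, Integrable (Ψ p) τ := by
    intro p
    have i1 : Integrable (fun s => (kk s (X p.1) - kk s (X p.2)) • deriv f s) :=
      kk_smul_integrable hf' _ _
    have i2 : Integrable
        (fun t => (kk t (Y p.1) - kk t (Y p.2)) • (starRingEnd 𝕜) (deriv g t)) :=
      kk_smul_integrable (RCLike.continuous_conj.comp hg') _ _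
    have := i1.mul_prod i2
    refine this.congr (ae_of_all _ fun σ => ?_)
    show _ = Δ σ p • c σ
    rw [hΔ, hc]
    simp only [smul_mul_smul_comm]
  -- integrability of Ψ on the product
  have hΨint : Integrable (fun q : (Ω × Ω) × ℝ × ℝ => Ψ q.1 q.2) (ν.prod τ) := by
    rw [MeasureTheory.integrable_prod_iff hΨm]
    constructor
    · exact ae_of_all _ hint_p
    · -- Integrable (fun p => ∫ σ, ‖Ψ p σ‖ ∂τ) ν
      have hXX : MemLp (fun p : Ω × Ω => X p.1 - X p.2) 2 ν := by
        have mp1 : MeasurePreserving (Prod.fst : Ω × Ω → Ω) ν μ :=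
          ⟨measurable_fst, by simp [hν]⟩
        have mp2 : MeasurePreserving (Prod.snd : Ω × Ω → Ω) ν μ :=
          ⟨measurable_snd, by simp [hν]⟩
        exact (hX2.comp_measurePreserving mp1).sub
          (hX2.comp_measurePreserving mp2)
      have hYY : MemLp (fun p : Ω × Ω => Y p.1 - Y p.2) 2 ν := by
        have mp1 : MeasurePreserving (Prod.fst : Ω × Ω → Ω) ν μ :=
          ⟨measurable_fst, by simp [hν]⟩
        have mp2 : MeasurePreserving (Prod.snd : Ω × Ω → Ω) ν μ :=
          ⟨measurable_snd, by simp [hν]⟩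
        exact (hY2.comp_measurePreserving mp1).sub
          (hY2.comp_measurePreserving mp2)
      have hbd : Integrable
          (fun p : Ω × Ω => (A * B) * (|X p.1 - X p.2| * |Y p.1 - Y p.2|)) ν := by
        have := (mul_int (𝕜 := ℝ) hXX hYY).abs
        refine (this.const_mul (A * B)).congr (ae_of_all _ fun p => ?_)
        simp [abs_mul]
      refine Integrable.mono' hbd (hΨm.norm.integral_prod_right') (ae_of_all _ fun p => ?_)
      rw [Real.norm_eq_abs, abs_of_nonneg (integral_nonneg fun σ => norm_nonneg _)]
      -- bound the inner integral
      have hb1 : ∀ σ : ℝ × ℝ, ‖Ψ p σ‖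
          ≤ (A * |kk σ.1 (X p.1) - kk σ.1 (X p.2)|) * (B * |kk σ.2 (Y p.1) - kk σ.2 (Y p.2)|) := by
        intro σ
        rw [hΨ]
        simp only [norm_smul, Real.norm_eq_abs, hΔ, hc, norm_mul, abs_mul, RCLike.norm_conj]
        have h0f : ‖deriv f σ.1‖ ≤ A := hA _
        have h0g : ‖deriv g σ.2‖ ≤ B := hB _
        have n1 : (0:ℝ) ≤ |kk σ.1 (X p.1) - kk σ.1 (X p.2)| := abs_nonneg _
        have n2 : (0:ℝ) ≤ |kk σ.2 (Y p.1) - kk σ.2 (Y p.2)| := abs_nonneg _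
        calc |kk σ.1 (X p.1) - kk σ.1 (X p.2)| * |kk σ.2 (Y p.1) - kk σ.2 (Y p.2)|
              * (‖deriv f σ.1‖ * ‖deriv g σ.2‖)
            = (|kk σ.1 (X p.1) - kk σ.1 (X p.2)| * ‖deriv f σ.1‖)
              * (|kk σ.2 (Y p.1) - kk σ.2 (Y p.2)| * ‖deriv g σ.2‖) := by ring
          _ ≤ (|kk σ.1 (X p.1) - kk σ.1 (X p.2)| * A)
              * (|kk σ.2 (Y p.1) - kk σ.2 (Y p.2)| * B) :=
              mul_le_mul (mul_le_mul_of_nonneg_left h0f n1)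
                (mul_le_mul_of_nonneg_left h0g n2)
                (mul_nonneg n2 (norm_nonneg _))
                (mul_nonneg n1 ((norm_nonneg _).trans h0f))
          _ = A * |kk σ.1 (X p.1) - kk σ.1 (X p.2)|
              * (B * |kk σ.2 (Y p.1) - kk σ.2 (Y p.2)|) := by ring
      have hrhs : Integrable (fun σ : ℝ × ℝ =>
          (A * |kk σ.1 (X p.1) - kk σ.1 (X p.2)|) * (B * |kk σ.2 (Y p.1) - kk σ.2 (Y p.2)|)) τ :=
        ((kk_abs_integrable _ _).const_mul A).mul_prod ((kk_abs_integrable _ _).const_mul B)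
      calc ∫ σ, ‖Ψ p σ‖ ∂τ
          ≤ ∫ σ : ℝ × ℝ, (A * |kk σ.1 (X p.1) - kk σ.1 (X p.2)|)
              * (B * |kk σ.2 (Y p.1) - kk σ.2 (Y p.2)|) ∂τ :=
            integral_mono (hint_p p).norm hrhs hb1
        _ = (A * |X p.1 - X p.2|) * (B * |Y p.1 - Y p.2|) := by
            rw [hτ, MeasureTheory.integral_prod_mul
              (fun s => A * |kk s (X p.1) - kk s (X p.2)|)
              (fun t => B * |kk t (Y p.1) - kk t (Y p.2)|), integral_const_mul, integral_const_mul,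
              kk_abs_integral, kk_abs_integral]
        _ = (A * B) * (|X p.1 - X p.2| * |Y p.1 - Y p.2|) := by ring
  -- inner integral evaluation
  have hH : ∀ σ : ℝ × ℝ, ∫ p, Ψ p σ ∂ν
      = (2 * cov μ (fun ω => kk σ.1 (X ω)) (fun ω => kk σ.2 (Y ω))) • c σ := by
    intro σ
    have e : ∫ p, Ψ p σ ∂ν = (∫ p, Δ σ p ∂ν) • c σ :=
      integral_smul_const (fun p => Δ σ p) (c σ)
    rw [e]
    congr 1
    have hu : MemLp (fun ω => kk σ.1 (X ω)) 2 μ := kk_memℒp hX σ.1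
    have hv : MemLp (fun ω => kk σ.2 (Y ω)) 2 μ := kk_memℒp hY σ.2
    have h2 := cov_prod (𝕜 := ℝ) (fun ω => kk σ.1 (X ω)) (fun ω => kk σ.2 (Y ω)) hu hv
    simp only [starRingEnd_apply, star_trivial] at h2
    rw [hΔ, hν]
    rw [show cov μ (fun ω => kk σ.1 (X ω)) (fun ω => kk σ.2 (Y ω))
      = (∫ ω, kk σ.1 (X ω) * kk σ.2 (Y ω) ∂μ)
        - (∫ ω, kk σ.1 (X ω) ∂μ) * (∫ ω, kk σ.2 (Y ω) ∂μ) from rfl]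
    exact h2
  -- square integrability of the compositions
  have hU2 : MemLp (fun ω => f (X ω)) 2 μ := memℒp_comp_contDiff hX hX2 hf hA
  have hV2 : MemLp (fun ω => g (Y ω)) 2 μ := memℒp_comp_contDiff hY hY2 hg hB
  have hLHS := cov_prod (fun ω => f (X ω)) (fun ω => g (Y ω)) hU2 hV2
  have key : ∫ p, (f (X p.1) - f (X p.2)) * (starRingEnd 𝕜) (g (Y p.1) - g (Y p.2)) ∂ν
      = ∫ σ, ∫ p, Ψ p σ ∂ν ∂τ := by
    rw [show (fun p : Ω × Ω =>
        (f (X p.1) - f (X p.2)) * (starRingEnd 𝕜) (g (Y p.1) - g (Y p.2)))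
        = fun p => ∫ σ, Ψ p σ ∂τ from funext step1]
    exact MeasureTheory.integral_integral_swap (by exact hΨint)
  have main2 : 2 * ((∫ ω, f (X ω) * (starRingEnd 𝕜) (g (Y ω)) ∂μ)
      - (∫ ω, f (X ω) ∂μ) * (starRingEnd 𝕜) (∫ ω, g (Y ω) ∂μ))
      = ∫ σ, (2 * cov μ (fun ω => kk σ.1 (X ω)) (fun ω => kk σ.2 (Y ω))) • c σ ∂τ := by
    rw [← hLHS, key]
    exact integral_congr_ae (ae_of_all _ hH)
  have main3 : 2 * ((∫ ω, f (X ω) * (starRingEnd 𝕜) (g (Y ω)) ∂μ)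
      - (∫ ω, f (X ω) ∂μ) * (starRingEnd 𝕜) (∫ ω, g (Y ω) ∂μ))
      = 2 * ∫ σ, (cov μ (fun ω => kk σ.1 (X ω)) (fun ω => kk σ.2 (Y ω))) • c σ ∂τ := by
    rw [main2]
    have e : (fun σ : ℝ × ℝ =>
        (2 * cov μ (fun ω => kk σ.1 (X ω)) (fun ω => kk σ.2 (Y ω))) • c σ)
        = fun σ => (2:ℝ) • ((cov μ (fun ω => kk σ.1 (X ω)) (fun ω => kk σ.2 (Y ω))) • c σ) := by
      funext σ
      rw [smul_smul]
    rw [e, integral_smul, RCLike.real_smul_eq_coe_mul, RCLike.ofReal_ofNat]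
  refine ⟨mul_left_cancel₀ (two_ne_zero) main3, ?_⟩
  have hIint : Integrable (fun σ : ℝ × ℝ =>
      (2 * cov μ (fun ω => kk σ.1 (X ω)) (fun ω => kk σ.2 (Y ω))) • c σ) τ := by
    have h5 : Integrable (fun σ : ℝ × ℝ => ∫ p, Ψ p σ ∂ν) τ :=
      Integrable.integral_prod_right (by exact hΨint)
    exact h5.congr (ae_of_all _ hH)
  have h6 := hIint.smul ((2:ℝ)⁻¹)
  refine h6.congr (ae_of_all _ fun σ => ?_)
  simp only [Pi.smul_apply]
  rw [smul_smul]
  rw [show (2:ℝ)⁻¹ * (2 * cov μ (fun ω => kk σ.1 (X ω)) (fun ω => kk σ.2 (Y ω)))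
      = cov μ (fun ω => kk σ.1 (X ω)) (fun ω => kk σ.2 (Y ω)) by ring]


/-- Newman's covariance inequality: if `X`, `Y` are associated with finite variance and
`f, g : ℝ → ℂ` are `C¹` with bounded derivatives, then
`|Cov(f(X), g(Y))| ≤ ‖f′‖_∞ ‖g′‖_∞ Cov(X, Y)`. -/
theorem newman_covariance_inequality
    {Ω : Type*} [MeasurableSpace Ω] (μ : Measure Ω) [IsProbabilityMeasure μ]
    (X Y : Ω → ℝ) (hX : Measurable X) (hY : Measurable Y)
    (hX2 : MemLp X 2 μ) (hY2 : MemLp Y 2 μ)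
    (hassoc : IsAssociated μ ![X, Y])
    (f g : ℝ → ℂ) (hf : ContDiff ℝ 1 f) (hg : ContDiff ℝ 1 g)
    (hf' : ∃ C, ∀ x, ‖deriv f x‖ ≤ C) (hg' : ∃ C, ∀ x, ‖deriv g x‖ ≤ C) :
    ‖covC μ (fun ω => f (X ω)) (fun ω => g (Y ω))‖
      ≤ (⨆ x, ‖deriv f x‖) * (⨆ x, ‖deriv g x‖) * cov μ X Y := by
  obtain ⟨Cf, hCf⟩ := hf'
  obtain ⟨Cg, hCg⟩ := hg'
  have bddA : BddAbove (Set.range fun x => ‖deriv f x‖) :=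
    ⟨Cf, by rintro _ ⟨x, rfl⟩; exact hCf x⟩
  have bddB : BddAbove (Set.range fun x => ‖deriv g x‖) :=
    ⟨Cg, by rintro _ ⟨x, rfl⟩; exact hCg x⟩
  set A := ⨆ x, ‖deriv f x‖ with hAdef
  set B := ⨆ x, ‖deriv g x‖ with hBdef
  have hA : ∀ x, ‖deriv f x‖ ≤ A := fun x => le_ciSup bddA x
  have hB : ∀ x, ‖deriv g x‖ ≤ B := fun x => le_ciSup bddB x
  have hA0 : 0 ≤ A := (norm_nonneg _).trans (hA 0)
  have hB0 : 0 ≤ B := (norm_nonneg _).trans (hB 0)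
  obtain ⟨hEq, hInt⟩ := master μ X Y hX hY hX2 hY2 f g hf hg hA hB
  -- the real, identity-function case
  have hid : ContDiff ℝ 1 (fun x : ℝ => x) := contDiff_id
  have hAid : ∀ x : ℝ, ‖deriv (fun y : ℝ => y) x‖ ≤ 1 := by
    intro x; rw [deriv_id'']; norm_num
  obtain ⟨hEqR, hIntR⟩ :=
    master (𝕜 := ℝ) μ X Y hX hY hX2 hY2 (fun x => x) (fun x => x) hid hid hAid hAid
  simp only [starRingEnd_apply, star_trivial, deriv_id'', mul_one, smul_eq_mul] at hEqR hIntR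
  -- nonnegativity of the kernel covariance, by association
  have hHnn : ∀ σ : ℝ × ℝ,
      0 ≤ cov μ (fun ω => kk σ.1 (X ω)) (fun ω => kk σ.2 (Y ω)) := by
    intro σ
    have h := hassoc (fun v => kk σ.1 (v 0)) (fun v => kk σ.2 (v 1))
      (fun v w hvw => kk_mono σ.1 (hvw 0)) (fun v w hvw => kk_mono σ.2 (hvw 1))
      ((kk_meas σ.1).comp (measurable_pi_apply 0))
      ((kk_meas σ.2).comp (measurable_pi_apply 1))
      (by simpa using kk_memℒp hX σ.1) (by simpa using kk_memℒp hY σ.2)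
    simpa using h
  -- the covariance identity for `X, Y`
  have hcovXY : cov μ X Y
      = ∫ σ : ℝ × ℝ, cov μ (fun ω => kk σ.1 (X ω)) (fun ω => kk σ.2 (Y ω))
          ∂((volume : Measure ℝ).prod volume) := hEqR
  have h1 : covC μ (fun ω => f (X ω)) (fun ω => g (Y ω))
      = ∫ σ : ℝ × ℝ, (cov μ (fun ω => kk σ.1 (X ω)) (fun ω => kk σ.2 (Y ω)))
          • (deriv f σ.1 * (starRingEnd ℂ) (deriv g σ.2))
          ∂((volume : Measure ℝ).prod volume) := hEq
  rw [h1]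
  calc ‖∫ σ : ℝ × ℝ, (cov μ (fun ω => kk σ.1 (X ω)) (fun ω => kk σ.2 (Y ω)))
          • (deriv f σ.1 * (starRingEnd ℂ) (deriv g σ.2))
          ∂((volume : Measure ℝ).prod volume)‖
      ≤ ∫ σ : ℝ × ℝ, ‖(cov μ (fun ω => kk σ.1 (X ω)) (fun ω => kk σ.2 (Y ω)))
          • (deriv f σ.1 * (starRingEnd ℂ) (deriv g σ.2))‖
          ∂((volume : Measure ℝ).prod volume) := norm_integral_le_integral_norm _
    _ ≤ ∫ σ : ℝ × ℝ, (A * B) * cov μ (fun ω => kk σ.1 (X ω)) (fun ω => kk σ.2 (Y ω))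
          ∂((volume : Measure ℝ).prod volume) := by
        refine integral_mono hInt.norm (hIntR.const_mul (A * B)) fun σ => ?_
        rw [norm_smul, Real.norm_eq_abs, abs_of_nonneg (hHnn σ), norm_mul, RCLike.norm_conj]
        calc cov μ (fun ω => kk σ.1 (X ω)) (fun ω => kk σ.2 (Y ω))
              * (‖deriv f σ.1‖ * ‖deriv g σ.2‖)
            ≤ cov μ (fun ω => kk σ.1 (X ω)) (fun ω => kk σ.2 (Y ω)) * (A * B) :=
              mul_le_mul_of_nonneg_left
                (mul_le_mul (hA _) (hB _) (norm_nonneg _) hA0) (hHnn σ)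
          _ = (A * B) * cov μ (fun ω => kk σ.1 (X ω)) (fun ω => kk σ.2 (Y ω)) := by ring
    _ = A * B * cov μ X Y := by
        rw [MeasureTheory.integral_const_mul, ← hcovXY]
end

section
/- Let X and Y be associated real-valued random variables with finite variance and E(X) = 0. Then E[X·Y·1_{(Y ≤ 0)}] ≥ 0, and consequently E[(max(X, X + Y))²] ≤ E[(X + Y)²]. -/
open MeasureTheory ProbabilityTheory

/-- If `X`, `Y` are associated with finite variance and `E(X) = 0`, then
`E[X Y 1_{(Y ≤ 0)}] ≥ 0`, and consequently `E[(max(X, X + Y))²] ≤ E[(X + Y)²]`. -/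
theorem sq_max_le_of_associated
    {Ω : Type*} [MeasurableSpace Ω] (μ : Measure Ω) [IsProbabilityMeasure μ]
    (X Y : Ω → ℝ) (hX : Measurable X) (hY : Measurable Y)
    (hX2 : MemLp X 2 μ) (hY2 : MemLp Y 2 μ)
    (hassoc : IsAssociated μ ![X, Y]) (hmean : ∫ ω, X ω ∂μ = 0) :
    0 ≤ ∫ ω, X ω * Y ω * (if Y ω ≤ 0 then (1 : ℝ) else 0) ∂μ ∧
    ∫ ω, (max (X ω) (X ω + Y ω)) ^ 2 ∂μ ≤ ∫ ω, (X ω + Y ω) ^ 2 ∂μ := by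
  -- min(Y,0) is in L², since |min(Y,0)| ≤ |Y|
  have hmin2 : MemLp (fun ω => min (Y ω) 0) 2 μ := by
    refine hY2.mono ((hY.min measurable_const).aestronglyMeasurable) ?_
    filter_upwards with ω
    simp only [Real.norm_eq_abs, abs_le]
    rcases le_total (Y ω) 0 with h | h
    · simp [min_eq_left h]; constructor <;> [exact neg_abs_le _; exact le_abs_self _]
    · simp [min_eq_right h, abs_nonneg]
  -- association applied to f = v ↦ v 0, g = v ↦ min (v 1) 0
  have hcov := hassoc (fun v => v 0) (fun v => min (v 1) 0)
    (fun a b h => h 0) (fun a b h => min_le_min (h 1) le_rfl)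
    (measurable_pi_apply 0) ((measurable_pi_apply 1).min measurable_const)
    (by simpa using hX2) (by simpa using hmin2)
  simp only [Matrix.cons_val_zero, Matrix.cons_val_one, Matrix.head_cons, cov] at hcov
  rw [hmean, zero_mul, sub_zero] at hcov
  -- part 1 : rewrite integrand
  have heq : (fun ω => X ω * Y ω * (if Y ω ≤ 0 then (1 : ℝ) else 0))
      = fun ω => X ω * min (Y ω) 0 := by
    funext ω
    split_ifs with h
    · simp [min_eq_left h]
    · simp [min_eq_right (le_of_not_ge h)]
  have h1 : 0 ≤ ∫ ω, X ω * Y ω * (if Y ω ≤ 0 then (1 : ℝ) else 0) ∂μ := by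
    rw [heq]; exact hcov
  refine ⟨h1, ?_⟩
  -- integrabilities
  have hIxm : Integrable (fun ω => X ω * min (Y ω) 0) μ := by
    have h := (hmin2.smul (𝕜 := ℝ) hX2
      (p := 2) (q := 2) (r := 1) (hpqr := ⟨by norm_num [ENNReal.inv_two_add_inv_two]⟩) : MemLp (X • fun ω => min (Y ω) 0) 1 μ)
    exact memLp_one_iff_integrable.mp h
  have hIm2 : Integrable (fun ω => (min (Y ω) 0) ^ 2) μ := by
    have := hmin2.integrable_sq
    simpa [sq] using this
  have hImax : MemLp (fun ω => max (X ω) (X ω + Y ω)) 2 μ := by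
    have : (fun ω => max (X ω) (X ω + Y ω)) = fun ω => X ω + max 0 (Y ω) := by
      funext ω
      rcases le_total (Y ω) 0 with h | h
      · simp [max_eq_left (by linarith : X ω + Y ω ≤ X ω), max_eq_left h]
      · simp [max_eq_right (by linarith : X ω ≤ X ω + Y ω), max_eq_right h]
    rw [this]
    refine hX2.add ?_
    refine hY2.mono ((measurable_const.max hY).aestronglyMeasurable) ?_
    filter_upwards with ω
    simp only [Real.norm_eq_abs, abs_le]
    rcases le_total (Y ω) 0 with h | h
    · simp [max_eq_left h, abs_nonneg]
    · simp [max_eq_right h]; constructor <;> [exact neg_abs_le _; exact le_abs_self _]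
  have hImaxsq : Integrable (fun ω => (max (X ω) (X ω + Y ω)) ^ 2) μ := by
    have := hImax.integrable_sq
    simpa [sq] using this
  have hIrest : Integrable (fun ω => 2 * (X ω * min (Y ω) 0) + (min (Y ω) 0) ^ 2) μ :=
    (hIxm.const_mul 2).add hIm2
  -- pointwise identity
  have hpt : ∀ ω, (X ω + Y ω) ^ 2
      = (max (X ω) (X ω + Y ω)) ^ 2 + (2 * (X ω * min (Y ω) 0) + (min (Y ω) 0) ^ 2) := by
    intro ω
    rcases le_total (Y ω) 0 with h | h
    · rw [max_eq_left (by linarith : X ω + Y ω ≤ X ω), min_eq_left h]; ring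
    · rw [max_eq_right (by linarith : X ω ≤ X ω + Y ω), min_eq_right h]; ring
  calc ∫ ω, (max (X ω) (X ω + Y ω)) ^ 2 ∂μ
      ≤ ∫ ω, (max (X ω) (X ω + Y ω)) ^ 2 ∂μ
        + ∫ ω, 2 * (X ω * min (Y ω) 0) + (min (Y ω) 0) ^ 2 ∂μ := by
        have : 0 ≤ ∫ ω, 2 * (X ω * min (Y ω) 0) + (min (Y ω) 0) ^ 2 ∂μ := by
          rw [integral_add (hIxm.const_mul 2) hIm2, integral_const_mul]
          have h2 : 0 ≤ ∫ ω, (min (Y ω) 0) ^ 2 ∂μ :=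
            integral_nonneg fun ω => sq_nonneg _
          nlinarith [hcov]
        linarith
    _ = ∫ ω, (X ω + Y ω) ^ 2 ∂μ := by
        rw [← integral_add hImaxsq hIrest]
        exact integral_congr_ae (Filter.Eventually.of_forall fun ω => (hpt ω).symm)
end

section
/- Let X₁, X₂, …, Xₙ be associated, mean-zero, finite-variance random variables, let Sₖ = X₁ + ⋯ + Xₖ for 1 ≤ k ≤ n, and let Mₙ = max(S₁, S₂, …, Sₙ). Then E(Mₙ²) ≤ Var(Sₙ) (Newman–Wright maximal inequality). -/
open MeasureTheory ProbabilityTheory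


section Aux
variable {Ω : Type*} [MeasurableSpace Ω] {μ : Measure Ω}

lemma nw_memLp_max {f g : Ω → ℝ} (hf : MemLp f 2 μ) (hg : MemLp g 2 μ) :
    MemLp (fun ω => max (f ω) (g ω)) 2 μ := by
  have hid : (fun ω => max (f ω) (g ω))
      = fun ω => (2:ℝ)⁻¹ * ((f ω + g ω) + ‖f ω - g ω‖) := by
    funext ω
    rcases le_total (f ω) (g ω) with h | h
    · rw [max_eq_right h, Real.norm_eq_abs, abs_of_nonpos (by linarith)]; ring
    · rw [max_eq_left h, Real.norm_eq_abs, abs_of_nonneg (by linarith)]; ring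
  rw [hid]
  exact ((hf.add hg).add (hf.sub hg).norm).const_mul _

lemma nw_memLp_sup' {ι : Type*} {s : Finset ι} (hs : s.Nonempty) {F : ι → Ω → ℝ}
    (hF : ∀ i ∈ s, MemLp (F i) 2 μ) :
    MemLp (fun ω => s.sup' hs (fun i => F i ω)) 2 μ := by
  induction s using Finset.cons_induction with
  | empty => exact absurd hs (by simp)
  | cons a s ha ih =>
    rcases s.eq_empty_or_nonempty with rfl | hs'
    · simpa using hF a (by simp)
    · have h1 : MemLp (F a) 2 μ := hF a (by simp)
      have h2 := ih hs' (fun i hi => hF i (Finset.mem_cons_of_mem hi))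
      have : (fun ω => (Finset.cons a s ha).sup' hs (fun i => F i ω))
          = fun ω => max (F a ω) (s.sup' hs' (fun i => F i ω)) := by
        funext ω; rw [Finset.sup'_cons hs']
      rw [this]
      exact nw_memLp_max h1 h2

lemma nw_measurable_sup' {ι : Type*} {s : Finset ι} (hs : s.Nonempty) {F : ι → Ω → ℝ}
    (hF : ∀ i ∈ s, Measurable (F i)) :
    Measurable (fun ω => s.sup' hs (fun i => F i ω)) := by
  induction s using Finset.cons_induction with
  | empty => exact absurd hs (by simp)
  | cons a s ha ih =>
    rcases s.eq_empty_or_nonempty with rfl | hs'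
    · simpa using hF a (by simp)
    · have h2 := ih hs' (fun i hi => hF i (Finset.mem_cons_of_mem hi))
      have : (fun ω => (Finset.cons a s ha).sup' hs (fun i => F i ω))
          = fun ω => max (F a ω) (s.sup' hs' (fun i => F i ω)) := by
        funext ω; rw [Finset.sup'_cons hs']
      rw [this]
      exact (hF a (by simp)).max h2

lemma nw_integrable_mul {f g : Ω → ℝ} (hf : MemLp f 2 μ) (hg : MemLp g 2 μ) :
    Integrable (fun ω => f ω * g ω) μ := by
  refine (hf.integrable_sq.add hg.integrable_sq).mono'
    (hf.aestronglyMeasurable.mul hg.aestronglyMeasurable) ?_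
  filter_upwards with ω
  simp only [Pi.add_apply, Real.norm_eq_abs]
  rcases abs_cases (f ω * g ω) with ⟨h, _⟩ | ⟨h, _⟩ <;>
    nlinarith [sq_nonneg (f ω - g ω), sq_nonneg (f ω + g ω)]

lemma nw_sup'_set_eq {ι : Type*} {s t : Finset ι} (h : s = t) (hs : s.Nonempty) (f : ι → ℝ) :
    s.sup' hs f = t.sup' (h ▸ hs) f := by subst h; rfl

end Aux

/-- Newman–Wright maximal inequality: for associated, mean-zero, finite-variance
`X₁, …, Xₙ` with partial sums `Sₖ` and `Mₙ = max(S₁, …, Sₙ)`, `E(Mₙ²) ≤ Var(Sₙ)`. -/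
theorem newman_wright_maximal_inequality
    {Ω : Type*} [MeasurableSpace Ω] (μ : Measure Ω) [IsProbabilityMeasure μ]
    {n : ℕ} (hn : 1 ≤ n) (X : Fin n → Ω → ℝ) (hX : ∀ i, Measurable (X i))
    (hX2 : ∀ i, MemLp (X i) 2 μ) (hmean : ∀ i, ∫ ω, X i ω ∂μ = 0)
    (hassoc : IsAssociated μ X)
    (S : ℕ → Ω → ℝ)
    (hS : ∀ k ω, S k ω = ∑ i ∈ Finset.univ.filter (fun i : Fin n => (i : ℕ) < k), X i ω)
    (M : Ω → ℝ) (hM : ∀ ω, M ω = (Finset.Icc 1 n).sup' (Finset.nonempty_Icc.mpr hn)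
      (fun k => S k ω)) :
    ∫ ω, M ω ^ 2 ∂μ ≤ variance (S n) μ := by
  classical
  have hSm : ∀ k, Measurable (S k) := by
    intro k
    rw [show S k = fun ω => ∑ i ∈ Finset.univ.filter (fun i : Fin n => (i : ℕ) < k), X i ω
      from funext (hS k)]
    exact Finset.measurable_sum _ (fun i _ => hX i)
  have hS2 : ∀ k, MemLp (S k) 2 μ := by
    intro k
    rw [show S k = fun ω => ∑ i ∈ Finset.univ.filter (fun i : Fin n => (i : ℕ) < k), X i ω
      from funext (hS k)]
    exact memLp_finset_sum _ (fun i _ => hX2 i)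
  set Z : ℕ → Ω → ℝ := fun j ω =>
    (insert n (Finset.Icc (j+1) n)).sup' (Finset.insert_nonempty _ _)
      (fun k => S k ω - S n ω) with hZdef
  have hZ2 : ∀ j, MemLp (Z j) 2 μ := fun j =>
    nw_memLp_sup' _ (fun k _ => (hS2 k).sub (hS2 n))
  have hincr : ∀ (j : ℕ) (hj : j < n) ω, S (j+1) ω = S j ω + X ⟨j, hj⟩ ω := by
    intro j hj ω
    rw [hS, hS]
    have hset : Finset.univ.filter (fun i : Fin n => (i : ℕ) < j + 1)
        = insert (⟨j, hj⟩ : Fin n) (Finset.univ.filter (fun i : Fin n => (i : ℕ) < j)) := by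
      ext i
      simp only [Finset.mem_filter, Finset.mem_univ, true_and, Finset.mem_insert, Fin.ext_iff]
      omega
    rw [hset, Finset.sum_insert (by simp)]
    ring
  -- association gives `∫ X_j · Z_j ≤ 0`
  have hXZ : ∀ (j : ℕ) (hj : j < n), ∫ ω, X ⟨j, hj⟩ ω * Z j ω ∂μ ≤ 0 := by
    intro j hj
    set g : (Fin n → ℝ) → ℝ := fun x =>
      -((insert n (Finset.Icc (j+1) n)).sup' (Finset.insert_nonempty _ _)
        (fun k => (∑ i ∈ Finset.univ.filter (fun i : Fin n => (i : ℕ) < k), x i)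
          - ∑ i, x i)) with hgdef
    have hterm : ∀ (x : Fin n → ℝ) (k : ℕ),
        (∑ i ∈ Finset.univ.filter (fun i : Fin n => (i : ℕ) < k), x i) - ∑ i, x i
        = -∑ i ∈ Finset.univ.filter (fun i : Fin n => ¬ (i : ℕ) < k), x i := by
      intro x k
      rw [← Finset.sum_filter_add_sum_filter_not Finset.univ (fun i : Fin n => (i : ℕ) < k) x]
      ring
    have hcomp : (fun ω => g (fun i => X i ω)) = fun ω => -(Z j ω) := by
      funext ω
      simp only [hgdef, hZdef, neg_inj]
      refine Finset.sup'_congr _ rfl ?_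
      intro k _
      rw [hS k, hS n]
      congr 1
      exact Finset.sum_congr (Finset.filter_true_of_mem (fun i _ => i.isLt)).symm
        (fun _ _ => rfl)
    have hmono_g : Monotone g := by
      intro x y hxy
      simp only [hgdef, neg_le_neg_iff]
      apply Finset.sup'_le
      intro k hk
      refine le_trans ?_ (Finset.le_sup' _ hk)
      rw [hterm x k, hterm y k, neg_le_neg_iff]
      exact Finset.sum_le_sum (fun i _ => hxy i)
    have hmeas_g : Measurable g := by
      apply Measurable.neg
      exact nw_measurable_sup' _ (fun k _ =>
        (Finset.measurable_sum _ (fun i _ => measurable_pi_apply i)).sub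
          (Finset.measurable_sum _ (fun i _ => measurable_pi_apply i)))
    have h0 := hassoc (fun x => x ⟨j, hj⟩) g (fun x y h => h _) hmono_g
      (measurable_pi_apply _) hmeas_g (hX2 _) (by rw [hcomp]; exact (hZ2 j).neg)
    rw [hcomp] at h0
    unfold cov at h0
    have h1 : ∫ ω, X ⟨j, hj⟩ ω * -(Z j ω) ∂μ = -∫ ω, X ⟨j, hj⟩ ω * Z j ω ∂μ := by
      rw [← integral_neg]
      congr 1
      funext ω
      ring
    have h2 : ∫ ω, X ⟨j, hj⟩ ω ∂μ = 0 := hmean _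
    simp only [h1, h2, zero_mul, sub_zero] at h0
    linarith
  have intZS : ∀ (j : ℕ), Integrable (fun ω => Z j ω * (2*(S n ω - S j ω) + Z j ω)) μ :=
    fun j => nw_integrable_mul (hZ2 j) ((((hS2 n).sub (hS2 j)).const_mul 2).add (hZ2 j))
  -- the downward induction (as induction on `m = n - j - 1`)
  have key : ∀ (m j : ℕ), j + m + 1 = n →
      ∫ ω, Z j ω * (2*(S n ω - S j ω) + Z j ω) ∂μ ≤ 0 := by
    intro m
    induction m with
    | zero =>
      intro j hj
      have hZ0 : ∀ ω, Z j ω = 0 := by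
        intro ω
        have hset : insert n (Finset.Icc (j+1) n) = {n} := by
          ext k
          simp only [Finset.mem_insert, Finset.mem_Icc, Finset.mem_singleton]
          omega
        simp only [hZdef]
        rw [nw_sup'_set_eq hset, Finset.sup'_singleton, sub_self]
      have : (fun ω => Z j ω * (2*(S n ω - S j ω) + Z j ω)) = fun _ => (0:ℝ) := by
        funext ω; rw [hZ0]; ring
      rw [this, integral_zero]
    | succ m ih =>
      intro j hj
      have hjn : j < n := by omega
      have hrec : ∀ ω, Z j ω = max (S (j+1) ω - S n ω) (Z (j+1) ω) := by
        intro ω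
        have hset : insert n (Finset.Icc (j+1) n)
            = insert (j+1) (insert n (Finset.Icc (j+1+1) n)) := by
          ext k
          simp only [Finset.mem_insert, Finset.mem_Icc]
          omega
        simp only [hZdef]
        rw [nw_sup'_set_eq hset, Finset.sup'_insert]
      have hpt : ∀ ω, Z j ω * (2*(S n ω - S j ω) + Z j ω)
          ≤ Z (j+1) ω * (2*(S n ω - S (j+1) ω) + Z (j+1) ω)
            + 2*(X ⟨j, hjn⟩ ω * Z j ω) := by
        intro ω
        have hi := hincr j hjn ω
        have hZj : Z j ω = max (S (j+1) ω - S n ω) (Z (j+1) ω) := hrec ω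
        set a := Z (j+1) ω with ha
        set b := S (j+1) ω - S n ω with hb
        set x := X ⟨j, hjn⟩ ω with hx
        have hs1 : S n ω - S j ω = x - b := by rw [hb, hx]; linarith [hi]
        have hs2 : S n ω - S (j+1) ω = -b := by rw [hb]; ring
        rw [hZj, hs1, hs2]
        rcases le_total b a with h | h
        · rw [max_eq_right h]; nlinarith [sq_nonneg (a - b)]
        · rw [max_eq_left h]; nlinarith [sq_nonneg (a - b)]
      have intXZ : Integrable (fun ω => X ⟨j, hjn⟩ ω * Z j ω) μ :=
        nw_integrable_mul (hX2 _) (hZ2 j)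
      calc ∫ ω, Z j ω * (2*(S n ω - S j ω) + Z j ω) ∂μ
          ≤ ∫ ω, (Z (j+1) ω * (2*(S n ω - S (j+1) ω) + Z (j+1) ω)
              + 2*(X ⟨j, hjn⟩ ω * Z j ω)) ∂μ :=
            integral_mono (intZS j) ((intZS (j+1)).add (intXZ.const_mul 2)) hpt
        _ = (∫ ω, Z (j+1) ω * (2*(S n ω - S (j+1) ω) + Z (j+1) ω) ∂μ)
              + 2 * ∫ ω, X ⟨j, hjn⟩ ω * Z j ω ∂μ := by
            rw [integral_add (intZS (j+1)) (intXZ.const_mul 2), integral_const_mul]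
        _ ≤ 0 := by
            have h1 := ih (j+1) (by omega)
            have h2 := hXZ j hjn
            linarith
  -- assemble
  have hSn0 : ∫ ω, S n ω ∂μ = 0 := by
    simp only [hS]
    rw [integral_finset_sum _ (fun i _ => ((hX2 i).integrable (by norm_num)))]
    simp [hmean]
  have hS0 : ∀ ω, S 0 ω = 0 := by
    intro ω
    rw [hS]
    simp
  have hMZ : ∀ ω, M ω = S n ω + Z 0 ω := by
    intro ω
    have hmem : n ∈ Finset.Icc 1 n := by simp [Finset.mem_Icc]; omega
    have hset : Finset.Icc 1 n = insert n (Finset.Icc (0+1) n) := by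
      rw [Finset.insert_eq_self.mpr hmem]
    have hcs := Finset.comp_sup'_eq_sup'_comp
      (s := insert n (Finset.Icc (0+1) n)) (Finset.insert_nonempty _ _)
      (f := fun k => S k ω) (fun t => t - S n ω) (fun x y => (max_sub_sub_right x y _).symm)
    rw [hM, nw_sup'_set_eq hset]
    simp only [hZdef]
    have : ((insert n (Finset.Icc (0+1) n)).sup' (Finset.insert_nonempty _ _)
        (fun k => S k ω)) - S n ω
        = (insert n (Finset.Icc (0+1) n)).sup' (Finset.insert_nonempty _ _)
          (fun k => S k ω - S n ω) := hcs
    linarith [this]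
  have hvar : variance (S n) μ = ∫ ω, S n ω ^ 2 ∂μ := by
    rw [variance_eq_sub (hS2 n)]
    have h1 : (∫ ω, (S n ^ 2) ω ∂μ) = ∫ ω, S n ω ^ 2 ∂μ := by
      congr 1
    have h2 : (∫ ω, S n ω ∂μ) = 0 := hSn0
    simp only [Pi.pow_apply] at h1 ⊢
    rw [h2]
    ring_nf
  have hexp : (fun ω => M ω ^ 2)
      = fun ω => S n ω ^ 2 + Z 0 ω * (2*(S n ω - S 0 ω) + Z 0 ω) := by
    funext ω
    rw [hMZ ω, hS0 ω]
    ring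
  calc ∫ ω, M ω ^ 2 ∂μ
      = ∫ ω, (S n ω ^ 2 + Z 0 ω * (2*(S n ω - S 0 ω) + Z 0 ω)) ∂μ := by rw [hexp]
    _ = (∫ ω, S n ω ^ 2 ∂μ) + ∫ ω, Z 0 ω * (2*(S n ω - S 0 ω) + Z 0 ω) ∂μ :=
        integral_add (hS2 n).integrable_sq (intZS 0)
    _ ≤ ∫ ω, S n ω ^ 2 ∂μ := by linarith [key (n-1) 0 (by omega)]
    _ = variance (S n) μ := hvar.symm
end

section
/- Let X₁, X₂, … be associated, integrable, mean-zero random variables and let S₀ = 0 and Sₙ = X₁ + ⋯ + Xₙ. Then (Sₙ)_{n ≥ 1} is a demimartingale: for every j ≥ 1 and every coordinatewise nondecreasing measurable function g : ℝʲ → ℝ with (S_{j+1} − S_j)·g(S₁,…,S_j) integrable, E[(S_{j+1} − S_j)·g(S₁, …, S_j)] ≥ 0. -/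
open MeasureTheory ProbabilityTheory Filter

/- Auxiliary truncation lemmas -/

lemma trunc_mono (M : ℝ) : Monotone (fun t => max (-M) (min M t)) :=
  fun _ _ h => max_le_max le_rfl (min_le_min le_rfl h)

lemma trunc_abs_le (M t : ℝ) (hM : 0 ≤ M) : |max (-M) (min M t)| ≤ |t| := by
  rcases le_total 0 t with h | h
  · have h1 : (0:ℝ) ≤ min M t := le_min hM h
    rw [abs_of_nonneg (le_trans h1 (le_max_right _ _)), abs_of_nonneg h]
    exact max_le (le_trans (neg_nonpos.mpr hM) h) (min_le_right _ _)
  · have h1 : min M t = t := min_eq_right (le_trans h hM)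
    rw [h1, abs_of_nonpos (max_le (neg_nonpos.mpr hM) h), abs_of_nonpos h]
    exact neg_le_neg (le_max_right _ _)

lemma trunc_abs_le' (M t : ℝ) (hM : 0 ≤ M) : |max (-M) (min M t)| ≤ M := by
  rw [abs_le]
  exact ⟨le_max_left _ _, max_le (le_trans (neg_nonpos.mpr hM) hM) (min_le_left _ _)⟩

lemma trunc_eq (M t : ℝ) (h : |t| ≤ M) : max (-M) (min M t) = t := by
  have h1 : t ≤ M := le_trans (le_abs_self t) h
  have h2 : -M ≤ t := neg_le.mp (le_trans (neg_le_abs t) h)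
  rw [min_eq_right h1, max_eq_right h2]

lemma trunc_tendsto (t : ℝ) :
    Tendsto (fun M : ℕ => max (-(M:ℝ)) (min (M:ℝ) t)) atTop (nhds t) := by
  obtain ⟨M₀, hM₀⟩ := exists_nat_ge |t|
  refine Tendsto.congr' ?_ (tendsto_const_nhds (x := t))
  filter_upwards [eventually_ge_atTop M₀] with M hM
  exact (trunc_eq _ _ (hM₀.trans (by exact_mod_cast hM))).symm

/-- Partial sums of associated, integrable, mean-zero random variables form a
demimartingale: `E[(S_{j+1} - S_j) g(S₁, …, S_j)] ≥ 0` for every `j ≥ 1` and every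
coordinatewise nondecreasing measurable `g` making the product integrable.
Here `X i` stands for `X_{i+1}` and `S j ω = X₁ ω + ⋯ + X_j ω`. -/
theorem partial_sums_associated_demimartingale
    {Ω : Type*} [MeasurableSpace Ω] (μ : Measure Ω) [IsProbabilityMeasure μ]
    (X : ℕ → Ω → ℝ) (hX : ∀ n, Measurable (X n)) (hint : ∀ n, Integrable (X n) μ)
    (hmean : ∀ n, ∫ ω, X n ω ∂μ = 0)
    (hassoc : ∀ n : ℕ, IsAssociated μ (fun i : Fin n => X (i : ℕ)))
    (S : ℕ → Ω → ℝ) (hS : ∀ j ω, S j ω = ∑ i ∈ Finset.range j, X i ω) :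
    ∀ j : ℕ, 1 ≤ j → ∀ g : (Fin j → ℝ) → ℝ, Monotone g → Measurable g →
      Integrable (fun ω => (S (j + 1) ω - S j ω) * g (fun i => S ((i : ℕ) + 1) ω)) μ →
      0 ≤ ∫ ω, (S (j + 1) ω - S j ω) * g (fun i => S ((i : ℕ) + 1) ω) ∂μ := by
  intro j hj g hg hgm hprod
  have hSd : ∀ ω, S (j+1) ω - S j ω = X j ω := by
    intro ω; rw [hS, hS, Finset.sum_range_succ]; ring
  set Y : Ω → ℝ := fun ω => g (fun i : Fin j => S ((i:ℕ)+1) ω) with hY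
  have hSmeas : ∀ n, Measurable (S n) := by
    intro n
    have : S n = fun ω => ∑ i ∈ Finset.range n, X i ω := funext (hS n)
    rw [this]
    exact Finset.measurable_sum _ fun i _ => hX i
  have hYmeas : Measurable Y := hgm.comp (measurable_pi_lambda _ fun i => hSmeas _)
  have hprod' : Integrable (fun ω => X j ω * Y ω) μ := by
    have := hprod
    simp only [hSd] at this
    exact this
  set F : ℕ → Ω → ℝ := fun M ω => max (-(M:ℝ)) (min (M:ℝ) (X j ω)) with hFdef
  set G : ℕ → Ω → ℝ := fun N ω => max (-(N:ℝ)) (min (N:ℝ) (Y ω)) with hGdef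
  have hFmeas : ∀ M, Measurable (F M) :=
    fun M => measurable_const.max (measurable_const.min (hX j))
  have hGmeas : ∀ N, Measurable (G N) :=
    fun N => measurable_const.max (measurable_const.min hYmeas)
  have hFabs : ∀ M ω, |F M ω| ≤ |X j ω| := fun M ω => trunc_abs_le _ _ (Nat.cast_nonneg M)
  have hGabs : ∀ N ω, |G N ω| ≤ |Y ω| := fun N ω => trunc_abs_le _ _ (Nat.cast_nonneg N)
  have hGb : ∀ N ω, |G N ω| ≤ (N:ℝ) := fun N ω => trunc_abs_le' _ _ (Nat.cast_nonneg N)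
  -- Step A: association for the truncations
  have key : ∀ M N : ℕ,
      (∫ ω, F M ω ∂μ) * (∫ ω, G N ω ∂μ) ≤ ∫ ω, F M ω * G N ω ∂μ := by
    intro M N
    have h := hassoc (j+1)
      (fun x => max (-(M:ℝ)) (min (M:ℝ) (x (Fin.last j))))
      (fun x => max (-(N:ℝ)) (min (N:ℝ) (g (fun i : Fin j =>
        ∑ k : Fin ((i:ℕ)+1), x (Fin.castLE (Nat.succ_le_succ i.isLt.le) k)))))
      ((trunc_mono (M:ℝ)).comp (fun a b hab => hab (Fin.last j)))
      ((trunc_mono (N:ℝ)).comp (hg.comp (fun a b hab i =>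
        Finset.sum_le_sum fun k _ => hab _)))
      (measurable_const.max (measurable_const.min (measurable_pi_apply _)))
      (measurable_const.max (measurable_const.min (hgm.comp
        (measurable_pi_lambda _ fun i =>
          Finset.measurable_sum _ fun k _ => measurable_pi_apply _))))
      (MemLp.of_bound
        ((measurable_const.max (measurable_const.min
          ((measurable_pi_apply (Fin.last j)).comp
            (measurable_pi_lambda _ fun i => hX _)))).aestronglyMeasurable) (M:ℝ)
        (ae_of_all _ fun ω => by
          simpa [Real.norm_eq_abs] using trunc_abs_le' (M:ℝ) _ (Nat.cast_nonneg M)))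
      (MemLp.of_bound
        ((measurable_const.max (measurable_const.min ((hgm.comp
          (measurable_pi_lambda _ fun i =>
            Finset.measurable_sum _ fun k _ => measurable_pi_apply _)).comp
            (measurable_pi_lambda _ fun i => hX _)))).aestronglyMeasurable) (N:ℝ)
        (ae_of_all _ fun ω => by
          simpa [Real.norm_eq_abs] using trunc_abs_le' (N:ℝ) _ (Nat.cast_nonneg N)))
    have hSsum : ∀ (i : Fin j) (ω : Ω),
        (∑ k : Fin ((i:ℕ)+1), X (k:ℕ) ω) = S ((i:ℕ)+1) ω := by
      intro i ω
      rw [hS, ← Fin.sum_univ_eq_sum_range (fun k => X k ω) ((i:ℕ)+1)]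
    have eF : ∀ ω, -(M:ℝ) ⊔ (M:ℝ) ⊓ X j ω = F M ω := fun ω => rfl
    have eG : ∀ ω, -(N:ℝ) ⊔ (N:ℝ) ⊓ g (fun i : Fin j => S ((i:ℕ)+1) ω) = G N ω :=
      fun ω => rfl
    simp only [cov, Fin.val_last, Fin.coe_castLE, hSsum, eF, eG] at h
    linarith
  -- Step B: let M → ∞
  have hFtend : Tendsto (fun M => ∫ ω, F M ω ∂μ) atTop (nhds 0) := by
    have h0 : (0:ℝ) = ∫ ω, X j ω ∂μ := (hmean j).symm
    rw [h0]
    exact tendsto_integral_of_dominated_convergence (fun ω => |X j ω|)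
      (fun M => (hFmeas M).aestronglyMeasurable) ((hint j).abs)
      (fun M => ae_of_all _ fun ω => by simpa [Real.norm_eq_abs] using hFabs M ω)
      (ae_of_all _ fun ω => trunc_tendsto (X j ω))
  have step2 : ∀ N : ℕ, 0 ≤ ∫ ω, X j ω * G N ω ∂μ := by
    intro N
    have hlim : Tendsto (fun M => ∫ ω, F M ω * G N ω ∂μ) atTop
        (nhds (∫ ω, X j ω * G N ω ∂μ)) := by
      refine tendsto_integral_of_dominated_convergence (fun ω => |X j ω| * N)
        (fun M => ((hFmeas M).mul (hGmeas N)).aestronglyMeasurable)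
        (((hint j).abs).mul_const _) (fun M => ae_of_all _ fun ω => ?_)
        (ae_of_all _ fun ω => (trunc_tendsto (X j ω)).mul_const (G N ω))
      rw [Real.norm_eq_abs, abs_mul]
      exact mul_le_mul (hFabs M ω) (hGb N ω) (abs_nonneg _) (abs_nonneg _)
    have hlim2 : Tendsto (fun M => (∫ ω, F M ω ∂μ) * (∫ ω, G N ω ∂μ)) atTop (nhds 0) := by
      simpa using hFtend.mul_const (∫ ω, G N ω ∂μ)
    exact le_of_tendsto_of_tendsto' hlim2 hlim (fun M => key M N)
  -- Step C: let N → ∞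
  have hlim3 : Tendsto (fun N => ∫ ω, X j ω * G N ω ∂μ) atTop
      (nhds (∫ ω, X j ω * Y ω ∂μ)) := by
    refine tendsto_integral_of_dominated_convergence (fun ω => |X j ω * Y ω|)
      (fun N => ((hX j).mul (hGmeas N)).aestronglyMeasurable) hprod'.abs
      (fun N => ae_of_all _ fun ω => ?_)
      (ae_of_all _ fun ω => (trunc_tendsto (Y ω)).const_mul (X j ω))
    show ‖X j ω * G N ω‖ ≤ |X j ω * Y ω|
    rw [Real.norm_eq_abs, abs_mul, abs_mul]
    exact mul_le_mul_of_nonneg_left (hGabs N ω) (abs_nonneg _)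
  have final : 0 ≤ ∫ ω, X j ω * Y ω ∂μ :=
    le_of_tendsto_of_tendsto' tendsto_const_nhds hlim3 step2
  calc (0:ℝ) ≤ ∫ ω, X j ω * Y ω ∂μ := final
    _ = ∫ ω, (S (j + 1) ω - S j ω) * Y ω ∂μ := by simp only [hSd]
end

section
/- Let (Xₙ)_{n ≥ 1} be a strictly stationary sequence of associated, mean-zero, square-integrable random variables with Var(X₁) + 2·Σ_{j=2}^∞ Cov(X₁, X_j) < ∞, let Sₙ = X₁ + ⋯ + Xₙ, and for fixed integers ℓ ≥ 1 and n ≥ ℓ set m = ⌊n/ℓ⌋. Then Var(Sₙ/√n − S_{mℓ}/√(mℓ)) ≤ Var(S_{n−mℓ})/n + (1 − √(mℓ/n))²·Var(S_{mℓ}/√(mℓ)); in particular, for each fixed ℓ this quantity tends to 0 as n → ∞. -/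
open MeasureTheory ProbabilityTheory Filter

/-- Block approximation bound in the proof of Newman's CLT: for a strictly stationary,
associated, mean-zero, square-integrable sequence with finite `σ²`, fixed `ℓ ≥ 1`,
`n ≥ ℓ` and `m = ⌊n/ℓ⌋`,
`Var(Sₙ/√n - S_{mℓ}/√(mℓ)) ≤ Var(S_{n-mℓ})/n + (1 - √(mℓ/n))² Var(S_{mℓ}/√(mℓ))`,
and for each fixed `ℓ` this quantity tends to `0` as `n → ∞`.
Here `X i` stands for `X_{i+1}` and `S k = X₁ + ⋯ + X_k`. -/
theorem block_variance_bound
    {Ω : Type*} [MeasurableSpace Ω] (μ : Measure Ω) [IsProbabilityMeasure μ]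
    (X : ℕ → Ω → ℝ) (hX : ∀ n, Measurable (X n)) (hX2 : ∀ n, MemLp (X n) 2 μ)
    (hmean : ∀ n, ∫ ω, X n ω ∂μ = 0)
    (hstat : ∀ n k : ℕ,
      Measure.map (fun ω => fun i : Fin n => X ((i : ℕ) + k) ω) μ
        = Measure.map (fun ω => fun i : Fin n => X (i : ℕ) ω) μ)
    (hassoc : ∀ n : ℕ, IsAssociated μ (fun i : Fin n => X (i : ℕ)))
    (hsum : Summable (fun j : ℕ => cov μ (X 0) (X (j + 1))))
    (S : ℕ → Ω → ℝ) (hS : ∀ k ω, S k ω = ∑ i ∈ Finset.range k, X i ω)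
    (ℓ : ℕ) (hℓ : 1 ≤ ℓ) :
    (∀ n : ℕ, ℓ ≤ n →
      variance (fun ω => S n ω / Real.sqrt n
          - S (n / ℓ * ℓ) ω / Real.sqrt (n / ℓ * ℓ : ℕ)) μ
        ≤ variance (S (n - n / ℓ * ℓ)) μ / n
          + (1 - Real.sqrt ((n / ℓ * ℓ : ℕ) / (n : ℝ))) ^ 2
            * variance (fun ω => S (n / ℓ * ℓ) ω / Real.sqrt (n / ℓ * ℓ : ℕ)) μ) ∧
    Tendsto
      (fun n : ℕ =>
        variance (fun ω => S n ω / Real.sqrt n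
          - S (n / ℓ * ℓ) ω / Real.sqrt (n / ℓ * ℓ : ℕ)) μ)
      atTop (nhds 0) := by
  classical
  -- products of L² functions are integrable
  have hmul : ∀ f g : Ω → ℝ, MemLp f 2 μ → MemLp g 2 μ →
      Integrable (fun ω => f ω * g ω) μ := by
    intro f g hf hg
    have h : MemLp (g • f) 1 μ := hf.smul hg (hpqr := ⟨by simp [ENNReal.inv_two_add_inv_two]⟩)
    exact (by simpa [smul_eq_mul, mul_comm] using h.integrable le_rfl : Integrable (f * g) μ)
  -- basic facts about S
  have hSfun : ∀ k, S k = fun ω => ∑ i ∈ Finset.range k, X i ω :=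
    fun k => funext fun ω => hS k ω
  have hS2 : ∀ k, MemLp (S k) 2 μ := by
    intro k; rw [hSfun k]; exact memLp_finset_sum _ (fun i _ => hX2 i)
  have hSmean : ∀ k, ∫ ω, S k ω ∂μ = 0 := by
    intro k
    rw [hSfun k, integral_finset_sum _ (fun i _ => (hX2 i).integrable one_le_two)]
    simp [hmean]
  -- stationarity transfer
  have hshift : ∀ (r k : ℕ) (g : (Fin r → ℝ) → ℝ), Measurable g →
      ∫ ω, g (fun i => X ((i : ℕ) + k) ω) ∂μ = ∫ ω, g (fun i => X (i : ℕ) ω) ∂μ := by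
    intro r k g hg
    have hFk : Measurable (fun ω => fun i : Fin r => X ((i : ℕ) + k) ω) :=
      measurable_pi_lambda _ (fun i => hX _)
    have hF0 : Measurable (fun ω => fun i : Fin r => X (i : ℕ) ω) :=
      measurable_pi_lambda _ (fun i => hX _)
    rw [← integral_map hFk.aemeasurable hg.aestronglyMeasurable,
        ← integral_map hF0.aemeasurable hg.aestronglyMeasurable, hstat r k]
  -- the autocovariance function
  set γ : ℕ → ℝ := fun d => ∫ ω, X 0 ω * X d ω ∂μ with hγ
  have hγeq : ∀ i d : ℕ, ∫ ω, X i ω * X (i + d) ω ∂μ = γ d := by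
    intro i d
    have h := hshift (d + 1) i (fun v => v 0 * v (Fin.last d))
      ((measurable_pi_apply 0).mul (measurable_pi_apply _))
    simpa [Fin.last, Nat.add_comm] using h
  have hγpos : ∀ d, 0 ≤ γ d := by
    intro d
    match d with
    | 0 => exact integral_nonneg fun ω => mul_self_nonneg _
    | (d + 1) =>
      have h := hassoc (d + 2) (fun v => v 0) (fun v => v (Fin.last (d + 1)))
        (fun v w h => h _) (fun v w h => h _)
        (measurable_pi_apply _) (measurable_pi_apply _)
        (by simpa using hX2 0) (by simpa [Fin.last] using hX2 (d + 1))
      simpa [cov, Fin.last, hmean] using h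
  have hsum' : Summable (fun j => γ (j + 1)) := by
    have : (fun j : ℕ => cov μ (X 0) (X (j + 1))) = fun j => γ (j + 1) := by
      funext j; simp [cov, hmean]; rfl
    rwa [this] at hsum
  set σ2 : ℝ := γ 0 + 2 * ∑' j, γ (j + 1) with hσ2def
  have hσ2 : 0 ≤ σ2 := by
    have h1 : 0 ≤ ∑' j, γ (j + 1) := tsum_nonneg fun j => hγpos _
    have := hγpos 0
    positivity
  -- variance of a centered L² function
  have hvar_int : ∀ f : Ω → ℝ, MemLp f 2 μ → (∫ ω, f ω ∂μ) = 0 →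
      variance f μ = ∫ ω, f ω ^ 2 ∂μ := by
    intro f hf h0
    rw [variance_eq_sub hf]
    show (∫ ω, f ω ^ 2 ∂μ) - (∫ ω, f ω ∂μ) ^ 2 = _
    rw [h0]; ring
  -- variance of partial sums bound
  have hvarbound : ∀ k : ℕ, variance (S k) μ ≤ k * σ2 := by
    intro k
    have hvar : variance (S k) μ
        = ∑ i ∈ Finset.range k, ∑ j ∈ Finset.range k, ∫ ω, X i ω * X j ω ∂μ := by
      have hpt : ∀ ω, (S k ω) ^ 2
          = ∑ i ∈ Finset.range k, ∑ j ∈ Finset.range k, X i ω * X j ω := by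
        intro ω; rw [hS k ω, sq, Finset.sum_mul_sum]
      rw [hvar_int (S k) (hS2 k) (hSmean k),
        show (fun ω => (S k ω) ^ 2)
          = fun ω => ∑ i ∈ Finset.range k, ∑ j ∈ Finset.range k, X i ω * X j ω from
          funext hpt,
        integral_finset_sum _ (fun i _ => integrable_finset_sum _
          (fun j _ => hmul _ _ (hX2 i) (hX2 j)))]
      exact Finset.sum_congr rfl fun i _ =>
        integral_finset_sum _ (fun j _ => hmul _ _ (hX2 i) (hX2 j))
    rw [hvar]
    have hinner : ∀ i ∈ Finset.range k,
        ∑ j ∈ Finset.range k, ∫ ω, X i ω * X j ω ∂μ ≤ σ2 := by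
      intro i hi
      rw [Finset.mem_range] at hi
      have hsplit : ∑ j ∈ Finset.range k, ∫ ω, X i ω * X j ω ∂μ
          = (∑ j ∈ Finset.range i, ∫ ω, X i ω * X j ω ∂μ) + (∫ ω, X i ω * X i ω ∂μ)
            + ∑ j ∈ Finset.Ico (i + 1) k, ∫ ω, X i ω * X j ω ∂μ := by
        rw [Finset.range_eq_Ico, ← Finset.sum_Ico_consecutive _ (Nat.zero_le (i+1)) hi,
          ← Finset.range_eq_Ico, Finset.sum_range_succ]
      have h1 : ∑ j ∈ Finset.range i, ∫ ω, X i ω * X j ω ∂μ ≤ ∑' j, γ (j + 1) := by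
        have heq : ∀ j ∈ Finset.range i, ∫ ω, X i ω * X j ω ∂μ = γ (i - j) := by
          intro j hj
          rw [Finset.mem_range] at hj
          have : ∫ ω, X i ω * X j ω ∂μ = ∫ ω, X j ω * X (j + (i - j)) ω ∂μ := by
            congr 1; funext ω; rw [mul_comm]; congr 2; omega
          rw [this, hγeq j (i - j)]
        rw [Finset.sum_congr rfl heq]
        have hre : ∑ j ∈ Finset.range i, γ (i - j) = ∑ j ∈ Finset.range i, γ (j + 1) := by
          rw [← Finset.sum_range_reflect]
          apply Finset.sum_congr rfl
          intro j hj
          rw [Finset.mem_range] at hj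
          congr 1; omega
        rw [hre]
        exact Summable.sum_le_tsum _ (fun j _ => hγpos _) hsum'
      have h2 : ∑ j ∈ Finset.Ico (i + 1) k, ∫ ω, X i ω * X j ω ∂μ ≤ ∑' j, γ (j + 1) := by
        have heq : ∀ j ∈ Finset.Ico (i + 1) k, ∫ ω, X i ω * X j ω ∂μ = γ (j - i) := by
          intro j hj
          rw [Finset.mem_Ico] at hj
          have : ∫ ω, X i ω * X j ω ∂μ = ∫ ω, X i ω * X (i + (j - i)) ω ∂μ := by
            congr 2; funext ω; congr 2; omega
          rw [this, hγeq i (j - i)]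
        rw [Finset.sum_congr rfl heq, Finset.sum_Ico_eq_sum_range]
        have hre : ∑ j ∈ Finset.range (k - (i + 1)), γ (i + 1 + j - i)
            = ∑ j ∈ Finset.range (k - (i + 1)), γ (j + 1) := by
          apply Finset.sum_congr rfl; intro j _; congr 1; omega
        rw [hre]
        exact Summable.sum_le_tsum _ (fun j _ => hγpos _) hsum'
      have h0 : ∫ ω, X i ω * X i ω ∂μ = γ 0 := by
        have := hγeq i 0; simpa using this
      rw [hsplit, h0, hσ2def]
      linarith
    calc ∑ i ∈ Finset.range k, ∑ j ∈ Finset.range k, ∫ ω, X i ω * X j ω ∂μ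
        ≤ ∑ _i ∈ Finset.range k, σ2 := Finset.sum_le_sum hinner
      _ = k * σ2 := by rw [Finset.sum_const, Finset.card_range, nsmul_eq_mul]
  -- key stationarity and association facts for block differences
  have hkey : ∀ n k : ℕ, k ≤ n →
      (∫ ω, (S n ω - S k ω) ^ 2 ∂μ = ∫ ω, (S (n - k) ω) ^ 2 ∂μ) ∧
      (0 ≤ ∫ ω, (S n ω - S k ω) * S k ω ∂μ) := by
    intro n k hkn
    have hT : ∀ ω, S n ω - S k ω = ∑ i ∈ Finset.range (n - k), X (k + i) ω := by
      intro ω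
      rw [hS n ω, hS k ω]
      have hsplit : ∑ i ∈ Finset.range n, X i ω
          = ∑ i ∈ Finset.range k, X i ω + ∑ i ∈ Finset.Ico k n, X i ω := by
        rw [Finset.range_eq_Ico, ← Finset.sum_Ico_consecutive _ (Nat.zero_le k) hkn, ← Finset.range_eq_Ico]
      rw [hsplit, Finset.sum_Ico_eq_sum_range]
      ring
    constructor
    · have h := hshift (n - k) k (fun v => (∑ i, v i) ^ 2)
        ((Finset.measurable_sum _ (fun i _ => measurable_pi_apply i)).pow_const 2)
      have e1 : (fun ω => (∑ i : Fin (n - k), X ((i : ℕ) + k) ω) ^ 2)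
          = fun ω => (S n ω - S k ω) ^ 2 := by
        funext ω
        rw [hT ω, Fin.sum_univ_eq_sum_range (fun j => X (j + k) ω) (n - k)]
        congr 1
        exact Finset.sum_congr rfl fun i _ => by rw [Nat.add_comm]
      have e2 : (fun ω => (∑ i : Fin (n - k), X ((i : ℕ)) ω) ^ 2)
          = fun ω => (S (n - k) ω) ^ 2 := by
        funext ω
        rw [hS (n - k) ω, Fin.sum_univ_eq_sum_range (fun j => X j ω) (n - k)]
      calc ∫ ω, (S n ω - S k ω) ^ 2 ∂μ
          = ∫ ω, (fun v : Fin (n-k) → ℝ => (∑ i, v i) ^ 2) (fun i => X ((i:ℕ) + k) ω) ∂μ := by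
            simp only []
            rw [show (fun ω => ((∑ i : Fin (n-k), X ((i:ℕ) + k) ω) ^ 2)) = _ from e1]
        _ = ∫ ω, (fun v : Fin (n-k) → ℝ => (∑ i, v i) ^ 2) (fun i => X (i:ℕ) ω) ∂μ := h
        _ = ∫ ω, (S (n - k) ω) ^ 2 ∂μ := by
            simp only []
            rw [show (fun ω => ((∑ i : Fin (n-k), X ((i:ℕ)) ω) ^ 2)) = _ from e2]
    · set f₀ : (Fin n → ℝ) → ℝ := fun v => ∑ i : Fin (n - k), v ⟨k + (i : ℕ), by omega⟩
        with hf₀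
      set g₀ : (Fin n → ℝ) → ℝ := fun v => ∑ i : Fin k, v ⟨(i : ℕ), by omega⟩ with hg₀
      have hf : Monotone f₀ := fun v w h => Finset.sum_le_sum fun i _ => h _
      have hg : Monotone g₀ := fun v w h => Finset.sum_le_sum fun i _ => h _
      have hfc : (fun ω => f₀ (fun i => X (i : ℕ) ω)) = fun ω => S n ω - S k ω := by
        funext ω
        rw [hf₀, hT ω]
        exact Fin.sum_univ_eq_sum_range (fun j => X (k + j) ω) (n - k)
      have hgc : (fun ω => g₀ (fun i => X (i : ℕ) ω)) = S k := by
        funext ω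
        rw [hg₀, hS k ω]
        exact Fin.sum_univ_eq_sum_range (fun j => X j ω) k
      have h := hassoc n f₀ g₀ hf hg
        (hf₀ ▸ Finset.measurable_sum _ (fun i _ => measurable_pi_apply _))
        (hg₀ ▸ Finset.measurable_sum _ (fun i _ => measurable_pi_apply _))
        (by rw [hfc]; exact (hS2 n).sub (hS2 k))
        (by rw [hgc]; exact hS2 k)
      rw [hfc, hgc] at h
      have hint : ∫ ω, (S n ω - S k ω) ∂μ = 0 := by
        rw [integral_sub ((hS2 n).integrable one_le_two) ((hS2 k).integrable one_le_two),
          hSmean n, hSmean k]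
        ring
      simpa [cov, hint, hSmean k] using h
  -- variance of normalized blocks is at most σ2
  have hvarU : ∀ k : ℕ, 1 ≤ k →
      variance (fun ω => S k ω / Real.sqrt k) μ ≤ σ2 := by
    intro k hk1
    have hkpos : (0 : ℝ) < k := by exact_mod_cast hk1
    have hb : (0 : ℝ) < Real.sqrt k := Real.sqrt_pos.2 hkpos
    have he : (fun ω => S k ω / Real.sqrt k) = (Real.sqrt k)⁻¹ • S k := by
      funext ω; simp [div_eq_inv_mul]
    rw [he, variance_smul]
    have h2 : ((Real.sqrt k)⁻¹) ^ 2 = (k : ℝ)⁻¹ := by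
      rw [inv_pow, Real.sq_sqrt hkpos.le]
    rw [h2]
    rw [inv_mul_le_iff₀ hkpos]
    calc variance (S k) μ ≤ k * σ2 := hvarbound k
      _ = k * σ2 := rfl
  -- the main inequality
  have main : ∀ n : ℕ, ℓ ≤ n →
      variance (fun ω => S n ω / Real.sqrt n
          - S (n / ℓ * ℓ) ω / Real.sqrt (n / ℓ * ℓ : ℕ)) μ
        ≤ variance (S (n - n / ℓ * ℓ)) μ / n
          + (1 - Real.sqrt ((n / ℓ * ℓ : ℕ) / (n : ℝ))) ^ 2
            * variance (fun ω => S (n / ℓ * ℓ) ω / Real.sqrt (n / ℓ * ℓ : ℕ)) μ := by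
    intro n hn
    set k : ℕ := n / ℓ * ℓ with hk
    have hkn : k ≤ n := Nat.div_mul_le_self n ℓ
    have hk1 : 1 ≤ k := by
      have : 1 ≤ n / ℓ := (Nat.one_le_div_iff (by omega)).2 hn
      calc 1 = 1 * 1 := by ring
        _ ≤ n / ℓ * ℓ := Nat.mul_le_mul this hℓ
    have hn1 : 1 ≤ n := le_trans hℓ hn
    have hnpos : (0 : ℝ) < n := by exact_mod_cast hn1
    have hkpos : (0 : ℝ) < k := by exact_mod_cast hk1
    set a : ℝ := Real.sqrt n with hadef
    set b : ℝ := Real.sqrt k with hbdef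
    have ha : 0 < a := Real.sqrt_pos.2 hnpos
    have hb : 0 < b := Real.sqrt_pos.2 hkpos
    have ha2 : a ^ 2 = n := Real.sq_sqrt hnpos.le
    have hb2 : b ^ 2 = k := Real.sq_sqrt hkpos.le
    have hba : b ≤ a := Real.sqrt_le_sqrt (by exact_mod_cast hkn)
    set c : ℝ := 1 - b / a with hcdef
    have hc0 : 0 ≤ c := by
      rw [hcdef, sub_nonneg, div_le_one ha]; exact hba
    have hcs : Real.sqrt ((k : ℝ) / n) = b / a := Real.sqrt_div (Nat.cast_nonneg k) n
    -- the three relevant functions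
    set T : Ω → ℝ := fun ω => S n ω - S k ω with hTdef
    set U : Ω → ℝ := fun ω => S k ω / b with hUdef
    have hTm : MemLp T 2 μ := (hS2 n).sub (hS2 k)
    have hUm : MemLp U 2 μ := by
      have := (hS2 k).const_mul b⁻¹
      have he : U = fun ω => b⁻¹ * S k ω := by funext ω; rw [hUdef]; ring
      rwa [he]
    have hDm : MemLp (fun ω => S n ω / a - S k ω / b) 2 μ := by
      have h1 := (hS2 n).const_mul a⁻¹
      have h2 := (hS2 k).const_mul b⁻¹
      have := h1.sub h2
      have he : (fun ω => S n ω / a - S k ω / b)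
          = fun ω => a⁻¹ * S n ω - b⁻¹ * S k ω := by funext ω; ring
      rwa [he]
    have hDmean : ∫ ω, (S n ω / a - S k ω / b) ∂μ = 0 := by
      rw [integral_sub (((hS2 n).integrable one_le_two).div_const a)
        (((hS2 k).integrable one_le_two).div_const b),
        integral_div, integral_div, hSmean n, hSmean k]
      ring
    have hTmean : ∫ ω, T ω ∂μ = 0 := by
      rw [hTdef, integral_sub ((hS2 n).integrable one_le_two)
        ((hS2 k).integrable one_le_two), hSmean n, hSmean k]
      ring
    have hUmean : ∫ ω, U ω ∂μ = 0 := by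
      rw [hUdef]
      simp only []
      rw [integral_div, hSmean k]
      ring
    -- pointwise expansion of the square
    have hpt : ∀ ω, (S n ω / a - S k ω / b) ^ 2
        = T ω ^ 2 / a ^ 2 + c ^ 2 * U ω ^ 2
          - 2 * ((c / (a * b)) * (T ω * S k ω)) := by
      intro ω
      rw [hTdef, hUdef, hcdef]
      simp only []
      field_simp
      ring
    -- integrate
    have hint1 : Integrable (fun ω => T ω ^ 2 / a ^ 2) μ :=
      hTm.integrable_sq.div_const _
    have hint2 : Integrable (fun ω => c ^ 2 * U ω ^ 2) μ :=
      hUm.integrable_sq.const_mul _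
    have hint3 : Integrable (fun ω => 2 * ((c / (a * b)) * (T ω * S k ω))) μ :=
      ((hmul T (S k) hTm (hS2 k)).const_mul _).const_mul _
    have hIsq : ∫ ω, (S n ω / a - S k ω / b) ^ 2 ∂μ
        = (∫ ω, T ω ^ 2 ∂μ) / a ^ 2 + c ^ 2 * ∫ ω, U ω ^ 2 ∂μ
          - 2 * ((c / (a * b)) * ∫ ω, T ω * S k ω ∂μ) := by
      rw [show (fun ω => (S n ω / a - S k ω / b) ^ 2)
          = fun ω => T ω ^ 2 / a ^ 2 + c ^ 2 * U ω ^ 2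
            - 2 * ((c / (a * b)) * (T ω * S k ω)) from funext hpt]
      have hint12 : Integrable (fun ω => T ω ^ 2 / a ^ 2 + c ^ 2 * U ω ^ 2) μ :=
        hint1.add hint2
      rw [integral_sub hint12 hint3, integral_add hint1 hint2,
        integral_div, integral_const_mul, integral_const_mul, integral_const_mul]
    have hTsq : ∫ ω, T ω ^ 2 ∂μ = variance (S (n - k)) μ := by
      rw [hvar_int (S (n - k)) (hS2 (n - k)) (hSmean (n - k))]
      exact (hkey n k hkn).1
    have hUsq : ∫ ω, U ω ^ 2 ∂μ = variance U μ := by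
      rw [hvar_int U hUm hUmean]
    have hcovpos : 0 ≤ ∫ ω, T ω * S k ω ∂μ := (hkey n k hkn).2
    have hvarD : variance (fun ω => S n ω / a - S k ω / b) μ
        = variance (S (n - k)) μ / a ^ 2 + c ^ 2 * variance U μ
          - 2 * ((c / (a * b)) * ∫ ω, T ω * S k ω ∂μ) := by
      rw [hvar_int _ hDm hDmean, hIsq, hTsq, hUsq]
    rw [hvarD, ha2, hcs]
    have hsub : 0 ≤ 2 * ((c / (a * b)) * ∫ ω, T ω * S k ω ∂μ) := by
      apply mul_nonneg (by norm_num)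
      exact mul_nonneg (div_nonneg hc0 (mul_nonneg ha.le hb.le)) hcovpos
    have : variance (S (n - k)) μ / (n : ℝ) + c ^ 2 * variance U μ
        - 2 * ((c / (a * b)) * ∫ ω, T ω * S k ω ∂μ)
        ≤ variance (S (n - k)) μ / (n : ℝ) + c ^ 2 * variance U μ := by linarith
    exact this
  refine ⟨main, ?_⟩
  -- the limit
  set C : ℝ := ∑ j ∈ Finset.range ℓ, variance (S j) μ with hC
  have hCb : ∀ r : ℕ, r < ℓ → variance (S r) μ ≤ C := by
    intro r hr
    exact Finset.single_le_sum (f := fun j => variance (S j) μ)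
      (fun j _ => variance_nonneg _ _) (Finset.mem_range.2 hr)
  have hbound : ∀ n : ℕ, ℓ ≤ n →
      variance (fun ω => S n ω / Real.sqrt n
        - S (n / ℓ * ℓ) ω / Real.sqrt (n / ℓ * ℓ : ℕ)) μ
      ≤ C / n + (1 - Real.sqrt (1 - (ℓ : ℝ) / n)) ^ 2 * σ2 := by
    intro n hn
    set k : ℕ := n / ℓ * ℓ with hk
    have hkn : k ≤ n := Nat.div_mul_le_self n ℓ
    have hk1 : 1 ≤ k := by
      have : 1 ≤ n / ℓ := (Nat.one_le_div_iff (by omega)).2 hn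
      calc 1 = 1 * 1 := by ring
        _ ≤ n / ℓ * ℓ := Nat.mul_le_mul this hℓ
    have hn1 : 1 ≤ n := le_trans hℓ hn
    have hnpos : (0 : ℝ) < n := by exact_mod_cast hn1
    have hdm : ℓ * (n / ℓ) + n % ℓ = n := Nat.div_add_mod n ℓ
    have hkml : k = ℓ * (n / ℓ) := by rw [hk, Nat.mul_comm]
    have hmod : n % ℓ < ℓ := Nat.mod_lt _ (by omega)
    have hrlt : n - k < ℓ := by omega
    have hklow : (n : ℝ) - ℓ ≤ k := by
      have hle : n ≤ k + ℓ := by omega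
      have hle' := (Nat.cast_le (α := ℝ)).2 hle
      push_cast at hle'
      linarith
    have h1 := main n hn
    have h2 : variance (S (n - k)) μ / n ≤ C / n :=
      (div_le_div_iff_of_pos_right hnpos).2 (hCb _ hrlt)
    have hratio1 : (1 : ℝ) - (ℓ : ℝ) / n ≤ (k : ℝ) / n := by
      have he : (1 : ℝ) - (ℓ : ℝ) / n = ((n : ℝ) - ℓ) / n := by field_simp
      rw [he]
      exact (div_le_div_iff_of_pos_right hnpos).2 hklow
    have hratio2 : (k : ℝ) / n ≤ 1 := by
      rw [div_le_one hnpos]; exact_mod_cast hkn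
    have hs1 : Real.sqrt ((k : ℝ) / n) ≤ 1 := by
      rw [show (1 : ℝ) = Real.sqrt 1 from (Real.sqrt_one).symm]
      exact Real.sqrt_le_sqrt hratio2
    have hs2 : Real.sqrt (1 - (ℓ : ℝ) / n) ≤ Real.sqrt ((k : ℝ) / n) :=
      Real.sqrt_le_sqrt hratio1
    have hsq : (1 - Real.sqrt ((k : ℝ) / n)) ^ 2
        ≤ (1 - Real.sqrt (1 - (ℓ : ℝ) / n)) ^ 2 := by
      apply pow_le_pow_left₀ (by linarith)
      linarith
    have h3 : (1 - Real.sqrt ((k : ℝ) / n)) ^ 2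
          * variance (fun ω => S k ω / Real.sqrt k) μ
        ≤ (1 - Real.sqrt (1 - (ℓ : ℝ) / n)) ^ 2 * σ2 := by
      apply mul_le_mul hsq (hvarU k hk1) (variance_nonneg _ _) (sq_nonneg _)
    calc variance (fun ω => S n ω / Real.sqrt n - S k ω / Real.sqrt k) μ
        ≤ variance (S (n - k)) μ / n
          + (1 - Real.sqrt ((k : ℕ) / (n : ℝ))) ^ 2
            * variance (fun ω => S k ω / Real.sqrt k) μ := h1
      _ ≤ C / n + (1 - Real.sqrt (1 - (ℓ : ℝ) / n)) ^ 2 * σ2 := by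
          exact add_le_add h2 h3
  -- the bounding sequence tends to zero
  have hg0 : Tendsto (fun n : ℕ => C / (n : ℝ)
      + (1 - Real.sqrt (1 - (ℓ : ℝ) / n)) ^ 2 * σ2) atTop (nhds 0) := by
    have l1 : Tendsto (fun n : ℕ => C / (n : ℝ)) atTop (nhds 0) :=
      tendsto_const_div_atTop_nhds_zero_nat C
    have l2 : Tendsto (fun n : ℕ => (ℓ : ℝ) / n) atTop (nhds 0) :=
      tendsto_const_div_atTop_nhds_zero_nat (ℓ : ℝ)
    have l3 : Tendsto (fun n : ℕ => 1 - Real.sqrt (1 - (ℓ : ℝ) / n)) atTop (nhds 0) := by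
      have h4 : Tendsto (fun n : ℕ => 1 - (ℓ : ℝ) / n) atTop (nhds 1) := by
        simpa using tendsto_const_nhds.sub l2
      have h5 : Tendsto (fun n : ℕ => Real.sqrt (1 - (ℓ : ℝ) / n)) atTop (nhds 1) := by
        have := h4.sqrt
        simpa using this
      have h6 := (tendsto_const_nhds (x := (1:ℝ)) (f := atTop (α := ℕ))).sub h5
      simpa using h6
    have l4 : Tendsto (fun n : ℕ => (1 - Real.sqrt (1 - (ℓ : ℝ) / n)) ^ 2 * σ2)
        atTop (nhds 0) := by
      have := (l3.pow 2).mul_const σ2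
      simpa using this
    simpa using l1.add l4
  apply tendsto_of_tendsto_of_tendsto_of_le_of_le' tendsto_const_nhds hg0
  · filter_upwards with n
    exact variance_nonneg _ _
  · filter_upwards [eventually_ge_atTop ℓ] with n hn
    exact hbound n hn
end
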